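/- arXiv:2510.22026 — 4 statements merged into one kernel-verified Lean document; each statement's English description precedes it below -/
import Mathlib

section
/- Let n ≥ 1, β > 0, let Q, K ∈ ℝ^{d×d} satisfy ‖QᵀK‖_op ≤ 1, and let θ₁, …, θₙ ∈ S^{d−1} satisfy ⟨θᵢ, θⱼ⟩ ≥ 1 − δ for all i, j, where 0 < δ < 1/(100 n² β²). Let s₁, …, sₙ > 0 be arbitrary, let θ̄ = (1/n)∑_{j=1}^n θⱼ, and let 𝒱 = 1 − ‖θ̄‖². Then the regulated variance dissipation D := (2/n) ∑_{k=1}^n (1/sₖ) ⟨θₖ − θ̄, P_{θₖ} Aₖ(Θ)⟩ satisfies the two-sided bound ( (−2 + 2nδ) / max_k sₖ ) 𝒱 + ( √2/(3√n) / min_k sₖ ) 𝒱 ≥ D ≥ − ( (2 + √2/(3√n)) / min_k sₖ ) 𝒱. -/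
open Filter Real
open scoped RealInnerProductSpace BigOperators

/-- Attention vector `A_j(Θ)` with parameters `Q, K`, value matrix `V = I_d`, and inverse
temperature `β`. -/
noncomputable def attnQK {d n : ℕ} (β : ℝ)
    (Q K : EuclideanSpace ℝ (Fin d) →L[ℝ] EuclideanSpace ℝ (Fin d))
    (θ : Fin n → EuclideanSpace ℝ (Fin d)) (j : Fin n) : EuclideanSpace ℝ (Fin d) :=
  (∑ l, Real.exp (β * ⟪Q (θ j), K (θ l)⟫))⁻¹ •
    ∑ k, Real.exp (β * ⟪Q (θ j), K (θ k)⟫) • θ k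

/-- Orthogonal projection onto the tangent space of the unit sphere at `θ`. -/
noncomputable def sphereProj {d : ℕ} (θ y : EuclideanSpace ℝ (Fin d)) :
    EuclideanSpace ℝ (Fin d) :=
  y - ⟪y, θ⟫ • θ

private lemma sproj_inner {d : ℕ} (t b A : EuclideanSpace ℝ (Fin d)) (ht : ‖t‖ = 1) :
    ⟪t - b, sphereProj t A⟫ = -⟪sphereProj t b, A⟫ := by
  have htt : ⟪t, t⟫ = (1:ℝ) := by rw [real_inner_self_eq_norm_sq, ht]; norm_num
  simp only [sphereProj, inner_sub_left, inner_sub_right, real_inner_smul_left,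
    real_inner_smul_right, htt]
  rw [real_inner_comm A t]
  ring

private lemma weight_bound {n : ℕ} (hn : 0 < n) (z : Fin n → ℝ) (hz : ∀ l, 0 < z l)
    (E : ℝ) (hE : 1 ≤ E) (hzz : ∀ l m, z l ≤ E * z m) (l : Fin n) :
    |z l / (∑ m, z m) - 1 / (n : ℝ)| ≤ (E - 1) / n := by
  haveI : Nonempty (Fin n) := ⟨⟨0, hn⟩⟩
  have hn0 : (0:ℝ) < n := by exact_mod_cast hn
  have hE0 : (0:ℝ) < E := lt_of_lt_of_le one_pos hE
  have hS : 0 < ∑ m, z m := Finset.sum_pos (fun m _ => hz m) Finset.univ_nonempty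
  have hSub : ∑ m, z m ≤ n * (E * z l) := by
    calc ∑ m, z m ≤ ∑ _m : Fin n, E * z l := Finset.sum_le_sum fun m _ => hzz m l
      _ = n * (E * z l) := by
          rw [Finset.sum_const, Finset.card_univ, Fintype.card_fin, nsmul_eq_mul]
  have hSlb : (n:ℝ) * z l ≤ E * ∑ m, z m := by
    have h1 : ∀ m, z l ≤ E * z m := fun m => hzz l m
    calc (n:ℝ) * z l = ∑ _m : Fin n, z l := by
          rw [Finset.sum_const, Finset.card_univ, Fintype.card_fin, nsmul_eq_mul]
      _ ≤ ∑ m, E * z m := Finset.sum_le_sum fun m _ => h1 m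
      _ = E * ∑ m, z m := by rw [Finset.mul_sum]
  rw [abs_le]
  constructor
  · rw [neg_le, neg_sub]
    have h2 : (1:ℝ)/n - z l / (∑ m, z m) ≤ 1/n - 1/(n * E) := by
      have : (1:ℝ)/(n * E) ≤ z l / (∑ m, z m) := by
        rw [div_le_div_iff₀ (by positivity) hS]
        calc 1 * ∑ m, z m = ∑ m, z m := one_mul _
          _ ≤ n * (E * z l) := hSub
          _ = z l * (n * E) := by ring
      linarith
    calc (1:ℝ)/n - z l / (∑ m, z m) ≤ 1/n - 1/(n*E) := h2
      _ = (E - 1) / (n * E) := by field_simp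
      _ ≤ (E - 1) / n := by
          apply div_le_div_of_nonneg_left (by linarith) hn0
          nlinarith
  · have h3 : z l / (∑ m, z m) ≤ E / n := by
      rw [div_le_div_iff₀ hS hn0]
      calc z l * n = n * z l := by ring
        _ ≤ E * ∑ m, z m := hSlb
    have : E / n = 1/n + (E-1)/n := by field_simp; ring
    linarith [h3, this]

private lemma attn_close {d n : ℕ} (hn : 0 < n) (β : ℝ) (hβ : 0 < β)
    (Q K : EuclideanSpace ℝ (Fin d) →L[ℝ] EuclideanSpace ℝ (Fin d))
    (hQK : ‖(ContinuousLinearMap.adjoint Q).comp K‖ ≤ 1)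
    (δ : ℝ) (hδ : 0 < δ)
    (θ : Fin n → EuclideanSpace ℝ (Fin d)) (hθ : ∀ j, ‖θ j‖ = 1)
    (hcone : ∀ i j : Fin n, 1 - δ ≤ ⟪θ i, θ j⟫)
    (θbar : EuclideanSpace ℝ (Fin d)) (hθbar : θbar = (n : ℝ)⁻¹ • ∑ j, θ j)
    (V : ℝ) (hV : V = 1 - ‖θbar‖ ^ 2) (k : Fin n) :
    ‖attnQK β Q K θ k - θbar‖ ≤
      (Real.exp (β * Real.sqrt (2 * δ)) - 1) * Real.sqrt V := by
  haveI : Nonempty (Fin n) := ⟨⟨0, hn⟩⟩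
  have hn0 : (0:ℝ) < n := by exact_mod_cast hn
  have hn0' : (n:ℝ) ≠ 0 := ne_of_gt hn0
  set z : Fin n → ℝ := fun l => Real.exp (β * ⟪Q (θ k), K (θ l)⟫) with hz_def
  have hz : ∀ l, 0 < z l := fun l => Real.exp_pos _
  set E : ℝ := Real.exp (β * Real.sqrt (2 * δ)) with hE_def
  have hE : 1 ≤ E := Real.one_le_exp (by positivity)
  have hzz : ∀ l m, z l ≤ E * z m := by
    intro l m
    rw [hE_def, hz_def]
    simp only []
    rw [← Real.exp_add]
    apply Real.exp_le_exp.2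
    have hb : ⟪Q (θ k), K (θ l)⟫ - ⟪Q (θ k), K (θ m)⟫ ≤ Real.sqrt (2 * δ) := by
      have h1 : ⟪Q (θ k), K (θ l)⟫ - ⟪Q (θ k), K (θ m)⟫ = ⟪Q (θ k), K (θ l - θ m)⟫ := by
        rw [map_sub, inner_sub_right]
      have h3 : ‖θ l - θ m‖ ≤ Real.sqrt (2 * δ) := by
        have hsq : ‖θ l - θ m‖ ^ 2 ≤ 2 * δ := by
          rw [norm_sub_sq_real, hθ l, hθ m]
          have := hcone l m
          nlinarith
        calc ‖θ l - θ m‖ = Real.sqrt (‖θ l - θ m‖ ^ 2) := (Real.sqrt_sq (norm_nonneg _)).symm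
          _ ≤ Real.sqrt (2 * δ) := Real.sqrt_le_sqrt hsq
      have h2 : ⟪Q (θ k), K (θ l - θ m)⟫ =
          ⟪((ContinuousLinearMap.adjoint Q).comp K) (θ l - θ m), θ k⟫ := by
        rw [ContinuousLinearMap.comp_apply, ContinuousLinearMap.adjoint_inner_left,
          real_inner_comm]
      calc ⟪Q (θ k), K (θ l)⟫ - ⟪Q (θ k), K (θ m)⟫
          = ⟪((ContinuousLinearMap.adjoint Q).comp K) (θ l - θ m), θ k⟫ := by rw [h1, h2]
        _ ≤ ‖((ContinuousLinearMap.adjoint Q).comp K) (θ l - θ m)‖ * ‖θ k‖ :=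
            real_inner_le_norm _ _
        _ = ‖((ContinuousLinearMap.adjoint Q).comp K) (θ l - θ m)‖ := by rw [hθ k, mul_one]
        _ ≤ ‖(ContinuousLinearMap.adjoint Q).comp K‖ * ‖θ l - θ m‖ :=
            ContinuousLinearMap.le_opNorm _ _
        _ ≤ 1 * Real.sqrt (2 * δ) := mul_le_mul hQK h3 (norm_nonneg _) (by norm_num)
        _ = Real.sqrt (2 * δ) := one_mul _
    have := mul_le_mul_of_nonneg_left hb hβ.le
    rw [mul_sub] at this
    linarith
  have hw := weight_bound hn z hz E hE hzz
  set S : ℝ := ∑ m, z m with hS_def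
  have hS : 0 < S := Finset.sum_pos (fun m _ => hz m) Finset.univ_nonempty
  have hA : attnQK β Q K θ k = ∑ l, (z l / S) • θ l := by
    rw [attnQK, Finset.smul_sum]
    exact Finset.sum_congr rfl fun l _ => by rw [smul_smul, ← div_eq_inv_mul]
  have hws : ∑ l, z l / S = 1 := by rw [← Finset.sum_div, ← hS_def, div_self hS.ne']
  have hsθ : (1/(n:ℝ)) • (∑ l, θ l) = θbar := by rw [hθbar, one_div]
  have hdiff : attnQK β Q K θ k - θbar = ∑ l, (z l / S - 1/(n:ℝ)) • (θ l - θbar) := by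
    rw [hA]
    rw [eq_comm]
    calc ∑ l, (z l / S - 1/(n:ℝ)) • (θ l - θbar)
        = ∑ l, ((z l / S) • θ l - (1/(n:ℝ)) • θ l - (z l / S) • θbar + (1/(n:ℝ)) • θbar) :=
          Finset.sum_congr rfl fun l _ => by module
      _ = ((∑ l, (z l / S) • θ l) - (1/(n:ℝ)) • (∑ l, θ l)) - (∑ l, z l / S) • θbar
            + (n : ℕ) • ((1/(n:ℝ)) • θbar) := by
          rw [Finset.sum_add_distrib, Finset.sum_sub_distrib, Finset.sum_sub_distrib,
            Finset.sum_const, Finset.card_univ, Fintype.card_fin, ← Finset.smul_sum,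
            Finset.sum_smul]
      _ = (∑ l, (z l / S) • θ l) - θbar := by
          rw [hws, one_smul, hsθ]
          rw [← Nat.cast_smul_eq_nsmul ℝ, smul_smul, mul_one_div, div_self hn0', one_smul]
          abel
  have hb2 : ‖θbar‖ ^ 2 = 1 - V := by rw [hV]; ring
  have hsθsum : ∑ l, θ l = (n:ℝ) • θbar := by rw [hθbar, smul_inv_smul₀ hn0']
  have hinners : ∑ l, ⟪θ l, θbar⟫ = n * (1 - V) := by
    rw [← sum_inner, hsθsum, real_inner_smul_left, real_inner_self_eq_norm_sq, hb2]
  have h2 : ∑ l, ‖θ l - θbar‖ ^ 2 = n * V := by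
    calc ∑ l, ‖θ l - θbar‖ ^ 2
        = ∑ l, (1 - 2 * ⟪θ l, θbar⟫ + (1 - V)) :=
          Finset.sum_congr rfl fun l _ => by rw [norm_sub_sq_real, hθ l, hb2]; ring
      _ = ∑ _l : Fin n, (1:ℝ) - 2 * ∑ l, ⟪θ l, θbar⟫ + ∑ _l : Fin n, (1 - V) := by
          rw [Finset.sum_add_distrib, Finset.sum_sub_distrib, ← Finset.mul_sum]
      _ = n - 2 * (n * (1 - V)) + n * (1 - V) := by
          rw [hinners, Finset.sum_const, Finset.sum_const, Finset.card_univ, Fintype.card_fin,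
            nsmul_eq_mul, nsmul_eq_mul, mul_one]
      _ = n * V := by ring
  have hV0 : 0 ≤ V := by
    have hpos : (0:ℝ) ≤ ∑ l, ‖θ l - θbar‖ ^ 2 := Finset.sum_nonneg fun l _ => by positivity
    nlinarith
  have hsumnorm : ∑ l, ‖θ l - θbar‖ ≤ n * Real.sqrt V := by
    have hCS : (∑ l, ‖θ l - θbar‖) ^ 2 ≤ (n:ℝ) * ∑ l, ‖θ l - θbar‖ ^ 2 := by
      have := sq_sum_le_card_mul_sum_sq (s := Finset.univ) (f := fun l => ‖θ l - θbar‖)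
      simpa [Finset.card_univ] using this
    have h1 : (∑ l, ‖θ l - θbar‖) ^ 2 ≤ (n:ℝ) ^ 2 * V := by
      rw [h2] at hCS; nlinarith
    have hnn : 0 ≤ ∑ l, ‖θ l - θbar‖ := Finset.sum_nonneg fun l _ => norm_nonneg _
    calc ∑ l, ‖θ l - θbar‖ = Real.sqrt ((∑ l, ‖θ l - θbar‖) ^ 2) := (Real.sqrt_sq hnn).symm
      _ ≤ Real.sqrt ((n:ℝ) ^ 2 * V) := Real.sqrt_le_sqrt h1
      _ = n * Real.sqrt V := by rw [Real.sqrt_mul (by positivity), Real.sqrt_sq hn0.le]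
  rw [hdiff]
  calc ‖∑ l, (z l / S - 1/(n:ℝ)) • (θ l - θbar)‖
      ≤ ∑ l, ‖(z l / S - 1/(n:ℝ)) • (θ l - θbar)‖ := norm_sum_le _ _
    _ = ∑ l, |z l / S - 1/(n:ℝ)| * ‖θ l - θbar‖ :=
        Finset.sum_congr rfl fun l _ => by rw [norm_smul, Real.norm_eq_abs]
    _ ≤ ∑ l, ((E - 1)/n) * ‖θ l - θbar‖ :=
        Finset.sum_le_sum fun l _ => mul_le_mul_of_nonneg_right (hw l) (norm_nonneg _)
    _ = ((E - 1)/n) * ∑ l, ‖θ l - θbar‖ := by rw [← Finset.mul_sum]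
    _ ≤ ((E - 1)/n) * (n * Real.sqrt V) :=
        mul_le_mul_of_nonneg_left hsumnorm (div_nonneg (by linarith) hn0.le)
    _ = (E - 1) * Real.sqrt V := by field_simp

private lemma per_k_bound {d : ℕ} (t b A : EuclideanSpace ℝ (Fin d)) (ht : ‖t‖ = 1)
    (C : ℝ) (hC : ‖A - b‖ ≤ C) :
    |⟪t - b, sphereProj t A⟫ + (‖b‖ ^ 2 - ⟪b, t⟫ ^ 2)| ≤
      Real.sqrt (‖b‖ ^ 2 - ⟪b, t⟫ ^ 2) * C := by
  have h1 : ⟪t - b, sphereProj t A⟫ = -⟪sphereProj t b, A⟫ := sproj_inner t b A ht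
  have hMb : ⟪sphereProj t b, b⟫ = ‖b‖ ^ 2 - ⟪b, t⟫ ^ 2 := by
    simp only [sphereProj, inner_sub_left, real_inner_smul_left, real_inner_self_eq_norm_sq]
    rw [real_inner_comm t b]; ring
  have hNb : ‖sphereProj t b‖ ^ 2 = ‖b‖ ^ 2 - ⟪b, t⟫ ^ 2 := by
    simp only [sphereProj]
    rw [norm_sub_sq_real, real_inner_smul_right, norm_smul, Real.norm_eq_abs, mul_pow, sq_abs, ht]
    ring
  have hsplit : ⟪sphereProj t b, A⟫ = ⟪sphereProj t b, b⟫ + ⟪sphereProj t b, A - b⟫ := by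
    rw [← inner_add_right]; congr 1; abel
  have habs : |⟪sphereProj t b, A - b⟫| ≤ Real.sqrt (‖b‖ ^ 2 - ⟪b, t⟫ ^ 2) * C := by
    calc |⟪sphereProj t b, A - b⟫| ≤ ‖sphereProj t b‖ * ‖A - b‖ := abs_real_inner_le_norm _ _
      _ ≤ ‖sphereProj t b‖ * C := mul_le_mul_of_nonneg_left hC (norm_nonneg _)
      _ = Real.sqrt (‖b‖ ^ 2 - ⟪b, t⟫ ^ 2) * C := by
          rw [← hNb, Real.sqrt_sq (norm_nonneg _)]
  rw [h1, hsplit, hMb]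
  have heq : -((‖b‖ ^ 2 - ⟪b, t⟫ ^ 2) + ⟪sphereProj t b, A - b⟫) + (‖b‖ ^ 2 - ⟪b, t⟫ ^ 2)
      = -⟪sphereProj t b, A - b⟫ := by ring
  rw [heq, abs_neg]
  exact habs

private lemma arith_sq_le {a r : ℝ} (ha : |a| ≤ r) : a ^ 2 ≤ r ^ 2 := by
  nlinarith [sq_abs a, abs_nonneg a]

private lemma arith_sq_self {r : ℝ} (h0 : 0 ≤ r) (h1 : r ≤ 1) : r ^ 2 ≤ r := by nlinarith

private lemma arith_cs (nn r t : ℝ) (hn0 : 0 < nn) (hCS : (nn * r ^ 2) ^ 2 ≤ nn * t) :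
    nn * r ^ 2 - t ≤ nn * (1 - r ^ 2) := by
  have key : nn * (nn * r ^ 2 - t) ≤ nn * (nn * (1 - r ^ 2)) := by
    nlinarith [mul_nonneg hn0.le (sq_nonneg (1 - r ^ 2))]
  exact le_of_mul_le_mul_left key hn0

private lemma arith_key {r a dd : ℝ} (h1 : 1 - dd ≤ a) (h2 : a ≤ r) (h3 : 1 - dd ≤ r) :
    2 * (1 - dd) * (r - a) ≤ r ^ 2 - a ^ 2 := by
  nlinarith [mul_nonneg (show (0:ℝ) ≤ r + a - 2 * (1 - dd) by linarith)
    (show (0:ℝ) ≤ r - a by linarith)]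

private lemma arith_key2 {r dd nn : ℝ} (hd0 : 0 ≤ dd) (hr0 : 0 ≤ r) (hr1 : r ≤ 1)
    (hn2 : 2 ≤ nn) (h1r : 1 - r ≤ dd) :
    0 ≤ 2 * (1 - dd) * r - (1 - nn * dd) * (1 + r) := by
  nlinarith [mul_nonneg hd0 hr0, mul_nonneg hd0 (show (0:ℝ) ≤ nn - 2 by linarith),
    mul_nonneg (mul_nonneg hd0 hr0) (show (0:ℝ) ≤ nn - 2 by linarith)]

private lemma arith_main {nn r dd u : ℝ}
    (hsum2 : 2 * (1 - dd) * (nn * r - nn * r ^ 2) ≤ u)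
    (hprod : 0 ≤ nn * (1 - r) * (2 * (1 - dd) * r - (1 - nn * dd) * (1 + r))) :
    (2 - 2 * nn * dd) * (1 - r ^ 2) * nn ≤ 2 * u := by
  nlinarith [hsum2, hprod]

private lemma arith_sqrtn_le {x nn : ℝ} (hx1 : 1 ≤ x) (hx2 : x ^ 2 = nn) : x ≤ nn := by
  nlinarith

private lemma arith_c {E e t x nn : ℝ} (hexp : E * (1 - e) ≤ 1) (hE0 : 0 < E)
    (he0 : 0 ≤ e) (he15 : e ≤ 0.15) (hen : e * (10 * nn) ≤ t)
    (hx1 : 1 ≤ x) (hxn : x ≤ nn) (ht1 : 1 ≤ t) :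
    2 * (E - 1) * (3 * x) ≤ t := by
  have hEle : E ≤ 1.2 := by
    nlinarith [mul_nonneg hE0.le (show (0:ℝ) ≤ 0.15 - e by linarith)]
  have hc' : E - 1 ≤ 1.2 * e := by
    nlinarith [mul_nonneg (show (0:ℝ) ≤ 1.2 - E by linarith) he0]
  nlinarith [mul_le_mul_of_nonneg_right hc' (show (0:ℝ) ≤ x by linarith),
    mul_le_mul_of_nonneg_left hxn he0, hen, ht1]

private lemma arith_term_ub {g M B x imax imin : ℝ} (hlo : -B ≤ g + M) (hhi : g + M ≤ B)
    (h2 : imax ≤ x) (h3 : x ≤ imin) (h4 : 0 < x) (hM : 0 ≤ M) (hB : 0 ≤ B) :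
    x * g ≤ imax * (-M) + imin * B := by
  have e1 : x * g ≤ x * (-M + B) := mul_le_mul_of_nonneg_left (by linarith) h4.le
  have e2 : imax * M ≤ x * M := mul_le_mul_of_nonneg_right h2 hM
  have e3 : x * B ≤ imin * B := mul_le_mul_of_nonneg_right h3 hB
  nlinarith [e1, e2, e3]

private lemma arith_term_lb {g M B x imin : ℝ} (hlo : -B ≤ g + M)
    (h3 : x ≤ imin) (h4 : 0 < x) (hM : 0 ≤ M) (hB : 0 ≤ B) :
    imin * (-M - B) ≤ x * g := by
  have e1 : x * (-M - B) ≤ x * g := mul_le_mul_of_nonneg_left (by linarith) h4.le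
  have e2 : x * (M + B) ≤ imin * (M + B) := mul_le_mul_of_nonneg_right h3 (by linarith)
  nlinarith [e1, e2]

set_option maxHeartbeats 1600000 in
/-- two-sided bound on the regulated variance dissipation in a local cone.
Here `sSup (Set.range s)` and `sInf (Set.range s)` are `max_k s_k` and `min_k s_k`. -/
theorem variance_dissipation_bounds (d n : ℕ) (hn : 1 ≤ n) (β : ℝ) (hβ : 0 < β)
    (Q K : EuclideanSpace ℝ (Fin d) →L[ℝ] EuclideanSpace ℝ (Fin d))
    (hQK : ‖(ContinuousLinearMap.adjoint Q).comp K‖ ≤ 1)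
    (δ : ℝ) (hδ : 0 < δ) (hδ' : δ < 1 / (100 * n ^ 2 * β ^ 2))
    (θ : Fin n → EuclideanSpace ℝ (Fin d)) (hθ : ∀ j, ‖θ j‖ = 1)
    (hcone : ∀ i j : Fin n, 1 - δ ≤ ⟪θ i, θ j⟫)
    (s : Fin n → ℝ) (hs : ∀ k, 0 < s k)
    (θbar : EuclideanSpace ℝ (Fin d)) (hθbar : θbar = (n : ℝ)⁻¹ • ∑ j, θ j)
    (V : ℝ) (hV : V = 1 - ‖θbar‖ ^ 2)
    (D : ℝ) (hD : D = (2 / n) * ∑ k, (s k)⁻¹ * ⟪θ k - θbar, sphereProj (θ k) (attnQK β Q K θ k)⟫) :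
    ((-2 + 2 * n * δ) / sSup (Set.range s)) * V +
        ((Real.sqrt 2 / (3 * Real.sqrt n)) / sInf (Set.range s)) * V ≥ D ∧
      D ≥ -(((2 : ℝ) + Real.sqrt 2 / (3 * Real.sqrt n)) / sInf (Set.range s)) * V := by
  classical
  haveI : Nonempty (Fin n) := ⟨⟨0, by omega⟩⟩
  have hn0 : (0:ℝ) < n := by exact_mod_cast hn
  have hn0' : (n:ℝ) ≠ 0 := ne_of_gt hn0
  have hn1 : (1:ℝ) ≤ n := by exact_mod_cast hn
  rcases eq_or_lt_of_le hn with hone | hn2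
  · have hn1' : n = 1 := hone.symm
    subst hn1'
    have hb : θbar = θ 0 := by rw [hθbar]; simp
    have hVz : V = 0 := by rw [hV, hb, hθ 0]; ring
    have hDz : D = 0 := by
      rw [hD, Fin.sum_univ_one, hb, sub_self, inner_zero_left]; ring
    rw [hVz, hDz]
    constructor <;> norm_num
  have hn2' : (2:ℝ) ≤ n := by exact_mod_cast hn2
  -- min and max of the speed factors
  have hsmax_mem : sSup (Set.range s) ∈ Set.range s :=
    Set.Nonempty.csSup_mem (Set.range_nonempty s) (Set.finite_range s)
  have hsmin_mem : sInf (Set.range s) ∈ Set.range s :=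
    Set.Nonempty.csInf_mem (Set.range_nonempty s) (Set.finite_range s)
  have hsmax_pos : 0 < sSup (Set.range s) := by
    obtain ⟨k, hk⟩ := hsmax_mem; rw [← hk]; exact hs k
  have hsmin_pos : 0 < sInf (Set.range s) := by
    obtain ⟨k, hk⟩ := hsmin_mem; rw [← hk]; exact hs k
  have hle_max : ∀ k, s k ≤ sSup (Set.range s) :=
    fun k => le_csSup (Set.finite_range s).bddAbove ⟨k, rfl⟩
  have hmin_le : ∀ k, sInf (Set.range s) ≤ s k :=
    fun k => csInf_le (Set.finite_range s).bddBelow ⟨k, rfl⟩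
  -- basic geometric facts
  have hr0 : (0:ℝ) ≤ ‖θbar‖ := norm_nonneg _
  have hr1 : ‖θbar‖ ≤ 1 := by
    rw [hθbar]
    calc ‖(n : ℝ)⁻¹ • ∑ j, θ j‖ = (n:ℝ)⁻¹ * ‖∑ j, θ j‖ := by
          rw [norm_smul, Real.norm_eq_abs, abs_of_nonneg (by positivity)]
      _ ≤ (n:ℝ)⁻¹ * ∑ j, ‖θ j‖ :=
          mul_le_mul_of_nonneg_left (norm_sum_le _ _) (by positivity)
      _ = (n:ℝ)⁻¹ * n := by simp [hθ]
      _ = 1 := inv_mul_cancel₀ hn0'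
  have hsum_theta : ∑ k, θ k = (n:ℝ) • θbar := by rw [hθbar, smul_inv_smul₀ hn0']
  have hsum_a : ∑ k, ⟪θbar, θ k⟫ = n * ‖θbar‖ ^ 2 := by
    rw [← inner_sum, hsum_theta, real_inner_smul_right, real_inner_self_eq_norm_sq]
  have ha_le : ∀ k, ⟪θbar, θ k⟫ ≤ ‖θbar‖ := by
    intro k
    have := real_inner_le_norm θbar (θ k)
    rwa [hθ k, mul_one] at this
  have ha_abs : ∀ k, |⟪θbar, θ k⟫| ≤ ‖θbar‖ := by
    intro k
    have := abs_real_inner_le_norm θbar (θ k)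
    rwa [hθ k, mul_one] at this
  have ha_ge : ∀ k, 1 - δ ≤ ⟪θbar, θ k⟫ := by
    intro k
    have h1 : ⟪θbar, θ k⟫ = (n:ℝ)⁻¹ * ∑ j, ⟪θ j, θ k⟫ := by
      rw [hθbar, real_inner_smul_left, sum_inner]
    have h2 : (n:ℝ) * (1 - δ) ≤ ∑ j, ⟪θ j, θ k⟫ := by
      calc (n:ℝ) * (1 - δ) = ∑ _j : Fin n, (1 - δ) := by
            rw [Finset.sum_const, Finset.card_univ, Fintype.card_fin, nsmul_eq_mul]
        _ ≤ _ := Finset.sum_le_sum fun j _ => hcone j k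
    rw [h1, inv_mul_eq_div, le_div_iff₀ hn0]
    linarith only [h2]
  have hsum_ge : (n:ℝ) * (1 - δ) ≤ ∑ k, ⟪θbar, θ k⟫ := by
    calc (n:ℝ) * (1 - δ) = ∑ _k : Fin n, (1 - δ) := by
          rw [Finset.sum_const, Finset.card_univ, Fintype.card_fin, nsmul_eq_mul]
      _ ≤ _ := Finset.sum_le_sum fun k _ => ha_ge k
  have hrsq : 1 - δ ≤ ‖θbar‖ ^ 2 := by
    have h := hsum_ge
    rw [hsum_a] at h
    exact le_of_mul_le_mul_left (by linarith) hn0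
  have hsq_self : ‖θbar‖ ^ 2 ≤ ‖θbar‖ := arith_sq_self hr0 hr1
  have hrδ : 1 - δ ≤ ‖θbar‖ := by linarith only [hsq_self, hrsq]
  have hV0 : 0 ≤ V := by rw [hV]; linarith only [hsq_self, hr1]
  have hVδ : V ≤ δ := by rw [hV]; linarith only [hrsq]
  have hM0 : ∀ k, 0 ≤ ‖θbar‖ ^ 2 - ⟪θbar, θ k⟫ ^ 2 := by
    intro k
    have := arith_sq_le (ha_abs k)
    linarith only [this]
  have hMsum_le : ∑ k, (‖θbar‖ ^ 2 - ⟪θbar, θ k⟫ ^ 2) ≤ n * V := by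
    have hCS : (∑ k, ⟪θbar, θ k⟫) ^ 2 ≤ (n:ℝ) * ∑ k, ⟪θbar, θ k⟫ ^ 2 := by
      have := sq_sum_le_card_mul_sum_sq (s := Finset.univ) (f := fun k : Fin n => ⟪θbar, θ k⟫)
      simpa [Finset.card_univ] using this
    have h1 : ∑ k, (‖θbar‖ ^ 2 - ⟪θbar, θ k⟫ ^ 2)
        = n * ‖θbar‖ ^ 2 - ∑ k, ⟪θbar, θ k⟫ ^ 2 := by
      rw [Finset.sum_sub_distrib, Finset.sum_const, Finset.card_univ, Fintype.card_fin,
        nsmul_eq_mul]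
    rw [hsum_a] at hCS
    rw [h1, hV]
    exact arith_cs (n:ℝ) ‖θbar‖ _ hn0 hCS
  -- main-term lower bound
  have hMain : (2 - 2*(n:ℝ)*δ) * V ≤ (2/(n:ℝ)) * ∑ k, (‖θbar‖ ^ 2 - ⟪θbar, θ k⟫ ^ 2) := by
    rcases le_or_gt 1 ((n:ℝ)*δ) with hcase | hcase
    · have h1 : (2 - 2*(n:ℝ)*δ) * V ≤ 0 :=
        mul_nonpos_of_nonpos_of_nonneg (by linarith) hV0
      have h2 : (0:ℝ) ≤ (2/(n:ℝ)) * ∑ k, (‖θbar‖ ^ 2 - ⟪θbar, θ k⟫ ^ 2) :=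
        mul_nonneg (by positivity) (Finset.sum_nonneg fun k _ => hM0 k)
      linarith
    · have hkey : ∀ k, 2*(1-δ)*(‖θbar‖ - ⟪θbar, θ k⟫) ≤ ‖θbar‖ ^ 2 - ⟪θbar, θ k⟫ ^ 2 :=
        fun k => arith_key (ha_ge k) (ha_le k) hrδ
      have hsum1 : ∑ k, (‖θbar‖ - ⟪θbar, θ k⟫) = n*‖θbar‖ - n*‖θbar‖^2 := by
        rw [Finset.sum_sub_distrib, hsum_a, Finset.sum_const, Finset.card_univ,
          Fintype.card_fin, nsmul_eq_mul]
      have hsum2 : 2*(1-δ)*((n:ℝ)*‖θbar‖ - n*‖θbar‖^2)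
          ≤ ∑ k, (‖θbar‖ ^ 2 - ⟪θbar, θ k⟫ ^ 2) := by
        calc 2*(1-δ)*((n:ℝ)*‖θbar‖ - n*‖θbar‖^2)
            = ∑ k, 2*(1-δ)*(‖θbar‖ - ⟪θbar, θ k⟫) := by rw [← Finset.mul_sum, hsum1]
          _ ≤ _ := Finset.sum_le_sum fun k _ => hkey k
      have h1r : 1 - ‖θbar‖ ≤ δ := by linarith only [hsq_self, hVδ, hV]
      have hkey2 : 0 ≤ 2*(1-δ)*‖θbar‖ - (1-(n:ℝ)*δ)*(1+‖θbar‖) :=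
        arith_key2 hδ.le hr0 hr1 hn2' h1r
      rw [hV, div_mul_eq_mul_div, le_div_iff₀ hn0]
      exact arith_main hsum2
        (mul_nonneg (mul_nonneg hn0.le (by linarith : (0:ℝ) ≤ 1 - ‖θbar‖)) hkey2)
  -- the constants
  have hε0 : (0:ℝ) ≤ β * Real.sqrt (2 * δ) := by positivity
  have hεle : β * Real.sqrt (2 * δ) ≤ Real.sqrt 2 / (10 * n) := by
    have h1 : β * Real.sqrt (2 * δ) = Real.sqrt (β ^ 2 * (2 * δ)) := by
      rw [Real.sqrt_mul (sq_nonneg β), Real.sqrt_sq hβ.le]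
    have h2 : β ^ 2 * (2 * δ) ≤ (Real.sqrt 2 / (10 * n)) ^ 2 := by
      have hpos : (0:ℝ) < 100 * n ^ 2 * β ^ 2 := by positivity
      rw [lt_div_iff₀ hpos] at hδ'
      rw [div_pow, Real.sq_sqrt (by norm_num : (0:ℝ) ≤ 2)]
      rw [le_div_iff₀ (by positivity : (0:ℝ) < ((10:ℝ) * n) ^ 2)]
      nlinarith [hδ']
    rw [h1]
    calc Real.sqrt (β ^ 2 * (2 * δ)) ≤ Real.sqrt ((Real.sqrt 2 / (10 * n)) ^ 2) :=
          Real.sqrt_le_sqrt h2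
      _ = Real.sqrt 2 / (10 * n) := Real.sqrt_sq (by positivity)
  have hc0 : (0:ℝ) ≤ Real.exp (β * Real.sqrt (2 * δ)) - 1 := by
    have := Real.one_le_exp hε0
    linarith only [this]
  have hsqrt2_le : Real.sqrt 2 ≤ 1.5 := by
    rw [show (1.5:ℝ) = Real.sqrt (1.5 ^ 2) by rw [Real.sqrt_sq]; norm_num]
    exact Real.sqrt_le_sqrt (by norm_num)
  have hsqrt2_ge : (1:ℝ) ≤ Real.sqrt 2 := by
    rw [show (1:ℝ) = Real.sqrt 1 by simp]
    exact Real.sqrt_le_sqrt (by norm_num)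
  have hsn1 : (1:ℝ) ≤ Real.sqrt n := by
    rw [show (1:ℝ) = Real.sqrt 1 by simp]
    exact Real.sqrt_le_sqrt hn1
  have hsnsq : Real.sqrt n ^ 2 = n := Real.sq_sqrt hn0.le
  have hsn_le : Real.sqrt n ≤ n := arith_sqrtn_le hsn1 hsnsq
  have hε15 : β * Real.sqrt (2 * δ) ≤ 0.15 := by
    calc β * Real.sqrt (2 * δ) ≤ Real.sqrt 2 / (10 * n) := hεle
      _ ≤ 1.5 / 10 := by
          apply div_le_div₀ (by norm_num) hsqrt2_le (by norm_num)
          linarith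
      _ = 0.15 := by norm_num
  have hexp : Real.exp (β * Real.sqrt (2 * δ)) * (1 - β * Real.sqrt (2 * δ)) ≤ 1 := by
    have h := Real.add_one_le_exp (-(β * Real.sqrt (2 * δ)))
    rw [Real.exp_neg] at h
    have hp := Real.exp_pos (β * Real.sqrt (2 * δ))
    calc Real.exp (β * Real.sqrt (2 * δ)) * (1 - β * Real.sqrt (2 * δ))
        ≤ Real.exp (β * Real.sqrt (2 * δ)) * (Real.exp (β * Real.sqrt (2 * δ)))⁻¹ :=
          mul_le_mul_of_nonneg_left (by linarith) hp.le
      _ = 1 := mul_inv_cancel₀ hp.ne'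
  have hc : 2 * (Real.exp (β * Real.sqrt (2 * δ)) - 1) ≤
      Real.sqrt 2 / (3 * Real.sqrt n) := by
    rw [le_div_iff₀ (by positivity : (0:ℝ) < 3 * Real.sqrt n)]
    have hεn : β * Real.sqrt (2 * δ) * (10 * n) ≤ Real.sqrt 2 := by
      rw [← le_div_iff₀ (by positivity : (0:ℝ) < 10 * (n:ℝ))]
      exact hεle
    exact arith_c hexp (Real.exp_pos _) hε0 hε15 hεn hsn1 hsn_le hsqrt2_ge
  -- per-k bounds on the summands
  have hclose : ∀ k, ‖attnQK β Q K θ k - θbar‖ ≤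
      (Real.exp (β * Real.sqrt (2 * δ)) - 1) * Real.sqrt V :=
    fun k => attn_close (by omega) β hβ Q K hQK δ hδ θ hθ hcone θbar hθbar V hV k
  have hperk : ∀ k, |⟪θ k - θbar, sphereProj (θ k) (attnQK β Q K θ k)⟫ +
      (‖θbar‖ ^ 2 - ⟪θbar, θ k⟫ ^ 2)| ≤
      Real.sqrt (‖θbar‖ ^ 2 - ⟪θbar, θ k⟫ ^ 2) *
        ((Real.exp (β * Real.sqrt (2 * δ)) - 1) * Real.sqrt V) :=
    fun k => per_k_bound (θ k) θbar (attnQK β Q K θ k) (hθ k) _ (hclose k)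
  -- sum of the square roots
  have hsqM : ∑ k, Real.sqrt (‖θbar‖ ^ 2 - ⟪θbar, θ k⟫ ^ 2) ≤ n * Real.sqrt V := by
    have hCS : (∑ k, Real.sqrt (‖θbar‖ ^ 2 - ⟪θbar, θ k⟫ ^ 2)) ^ 2 ≤
        (n:ℝ) * ∑ k, Real.sqrt (‖θbar‖ ^ 2 - ⟪θbar, θ k⟫ ^ 2) ^ 2 := by
      have := sq_sum_le_card_mul_sum_sq (s := Finset.univ)
        (f := fun k : Fin n => Real.sqrt (‖θbar‖ ^ 2 - ⟪θbar, θ k⟫ ^ 2))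
      simpa [Finset.card_univ] using this
    have heq : ∑ k, Real.sqrt (‖θbar‖ ^ 2 - ⟪θbar, θ k⟫ ^ 2) ^ 2
        = ∑ k, (‖θbar‖ ^ 2 - ⟪θbar, θ k⟫ ^ 2) :=
      Finset.sum_congr rfl fun k _ => Real.sq_sqrt (hM0 k)
    rw [heq] at hCS
    have h1 : (∑ k, Real.sqrt (‖θbar‖ ^ 2 - ⟪θbar, θ k⟫ ^ 2)) ^ 2 ≤ (n:ℝ) ^ 2 * V := by
      calc (∑ k, Real.sqrt (‖θbar‖ ^ 2 - ⟪θbar, θ k⟫ ^ 2)) ^ 2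
          ≤ (n:ℝ) * ∑ k, (‖θbar‖ ^ 2 - ⟪θbar, θ k⟫ ^ 2) := hCS
        _ ≤ (n:ℝ) * ((n:ℝ) * V) := mul_le_mul_of_nonneg_left hMsum_le hn0.le
        _ = (n:ℝ) ^ 2 * V := by ring
    have hnn : (0:ℝ) ≤ ∑ k, Real.sqrt (‖θbar‖ ^ 2 - ⟪θbar, θ k⟫ ^ 2) :=
      Finset.sum_nonneg fun k _ => Real.sqrt_nonneg _
    calc ∑ k, Real.sqrt (‖θbar‖ ^ 2 - ⟪θbar, θ k⟫ ^ 2)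
        = Real.sqrt ((∑ k, Real.sqrt (‖θbar‖ ^ 2 - ⟪θbar, θ k⟫ ^ 2)) ^ 2) :=
          (Real.sqrt_sq hnn).symm
      _ ≤ Real.sqrt ((n:ℝ) ^ 2 * V) := Real.sqrt_le_sqrt h1
      _ = n * Real.sqrt V := by rw [Real.sqrt_mul (by positivity), Real.sqrt_sq hn0.le]
  -- per-term bounds after multiplying by (s k)⁻¹
  have hterm_ub : ∀ k, (s k)⁻¹ * ⟪θ k - θbar, sphereProj (θ k) (attnQK β Q K θ k)⟫ ≤
      (sSup (Set.range s))⁻¹ * (-(‖θbar‖ ^ 2 - ⟪θbar, θ k⟫ ^ 2)) +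
        (sInf (Set.range s))⁻¹ * (Real.sqrt (‖θbar‖ ^ 2 - ⟪θbar, θ k⟫ ^ 2) *
          ((Real.exp (β * Real.sqrt (2 * δ)) - 1) * Real.sqrt V)) := by
    intro k
    obtain ⟨hlo, hhi⟩ := abs_le.1 (hperk k)
    exact arith_term_ub hlo hhi (inv_anti₀ (hs k) (hle_max k))
      (inv_anti₀ hsmin_pos (hmin_le k)) (inv_pos.2 (hs k)) (hM0 k)
      (mul_nonneg (Real.sqrt_nonneg _) (mul_nonneg hc0 (Real.sqrt_nonneg _)))
  have hterm_lb : ∀ k, (sInf (Set.range s))⁻¹ * (-(‖θbar‖ ^ 2 - ⟪θbar, θ k⟫ ^ 2) -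
      Real.sqrt (‖θbar‖ ^ 2 - ⟪θbar, θ k⟫ ^ 2) *
        ((Real.exp (β * Real.sqrt (2 * δ)) - 1) * Real.sqrt V)) ≤
      (s k)⁻¹ * ⟪θ k - θbar, sphereProj (θ k) (attnQK β Q K θ k)⟫ := by
    intro k
    obtain ⟨hlo, hhi⟩ := abs_le.1 (hperk k)
    exact arith_term_lb hlo (inv_anti₀ hsmin_pos (hmin_le k)) (inv_pos.2 (hs k))
      (hM0 k) (mul_nonneg (Real.sqrt_nonneg _) (mul_nonneg hc0 (Real.sqrt_nonneg _)))
  -- sum the bounds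
  have hsum_ub : ∑ k, (s k)⁻¹ * ⟪θ k - θbar, sphereProj (θ k) (attnQK β Q K θ k)⟫ ≤
      (sSup (Set.range s))⁻¹ * (-(∑ k, (‖θbar‖ ^ 2 - ⟪θbar, θ k⟫ ^ 2))) +
        (sInf (Set.range s))⁻¹ * ((∑ k, Real.sqrt (‖θbar‖ ^ 2 - ⟪θbar, θ k⟫ ^ 2)) *
          ((Real.exp (β * Real.sqrt (2 * δ)) - 1) * Real.sqrt V)) := by
    calc ∑ k, (s k)⁻¹ * ⟪θ k - θbar, sphereProj (θ k) (attnQK β Q K θ k)⟫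
        ≤ ∑ k, ((sSup (Set.range s))⁻¹ * (-(‖θbar‖ ^ 2 - ⟪θbar, θ k⟫ ^ 2)) +
            (sInf (Set.range s))⁻¹ * (Real.sqrt (‖θbar‖ ^ 2 - ⟪θbar, θ k⟫ ^ 2) *
              ((Real.exp (β * Real.sqrt (2 * δ)) - 1) * Real.sqrt V))) :=
          Finset.sum_le_sum fun k _ => hterm_ub k
      _ = _ := by
          rw [Finset.sum_add_distrib, ← Finset.mul_sum, ← Finset.mul_sum,
            ← Finset.sum_neg_distrib, ← Finset.sum_mul]
  have hsum_lb : (sInf (Set.range s))⁻¹ * (-(∑ k, (‖θbar‖ ^ 2 - ⟪θbar, θ k⟫ ^ 2)) -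
        (∑ k, Real.sqrt (‖θbar‖ ^ 2 - ⟪θbar, θ k⟫ ^ 2)) *
          ((Real.exp (β * Real.sqrt (2 * δ)) - 1) * Real.sqrt V)) ≤
      ∑ k, (s k)⁻¹ * ⟪θ k - θbar, sphereProj (θ k) (attnQK β Q K θ k)⟫ := by
    calc (sInf (Set.range s))⁻¹ * (-(∑ k, (‖θbar‖ ^ 2 - ⟪θbar, θ k⟫ ^ 2)) -
          (∑ k, Real.sqrt (‖θbar‖ ^ 2 - ⟪θbar, θ k⟫ ^ 2)) *
            ((Real.exp (β * Real.sqrt (2 * δ)) - 1) * Real.sqrt V))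
        = ∑ k, (sInf (Set.range s))⁻¹ * (-(‖θbar‖ ^ 2 - ⟪θbar, θ k⟫ ^ 2) -
            Real.sqrt (‖θbar‖ ^ 2 - ⟪θbar, θ k⟫ ^ 2) *
              ((Real.exp (β * Real.sqrt (2 * δ)) - 1) * Real.sqrt V)) := by
          rw [← Finset.mul_sum]
          congr 1
          rw [eq_comm]
          calc ∑ k, (-(‖θbar‖ ^ 2 - ⟪θbar, θ k⟫ ^ 2) -
                Real.sqrt (‖θbar‖ ^ 2 - ⟪θbar, θ k⟫ ^ 2) *
                  ((Real.exp (β * Real.sqrt (2 * δ)) - 1) * Real.sqrt V))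
              = ∑ k, ((-1) * (‖θbar‖ ^ 2 - ⟪θbar, θ k⟫ ^ 2) +
                (-((Real.exp (β * Real.sqrt (2 * δ)) - 1) * Real.sqrt V)) *
                  Real.sqrt (‖θbar‖ ^ 2 - ⟪θbar, θ k⟫ ^ 2)) :=
              Finset.sum_congr rfl fun k _ => by ring
            _ = (-1) * ∑ k, (‖θbar‖ ^ 2 - ⟪θbar, θ k⟫ ^ 2) +
                (-((Real.exp (β * Real.sqrt (2 * δ)) - 1) * Real.sqrt V)) *
                  ∑ k, Real.sqrt (‖θbar‖ ^ 2 - ⟪θbar, θ k⟫ ^ 2) := by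
              rw [Finset.sum_add_distrib, ← Finset.mul_sum, ← Finset.mul_sum]
            _ = _ := by ring
      _ ≤ _ := Finset.sum_le_sum fun k _ => hterm_lb k
  -- the error-term estimate
  have hsv : Real.sqrt V * Real.sqrt V = V := Real.mul_self_sqrt hV0
  have hT : (∑ k, Real.sqrt (‖θbar‖ ^ 2 - ⟪θbar, θ k⟫ ^ 2)) *
      ((Real.exp (β * Real.sqrt (2 * δ)) - 1) * Real.sqrt V) ≤
      (n:ℝ) * ((Real.exp (β * Real.sqrt (2 * δ)) - 1) * V) := by
    have h1 := mul_le_mul_of_nonneg_right hsqM (mul_nonneg hc0 (Real.sqrt_nonneg V))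
    have h2 : ((n:ℝ) * Real.sqrt V) * ((Real.exp (β * Real.sqrt (2 * δ)) - 1) * Real.sqrt V)
        = (n:ℝ) * ((Real.exp (β * Real.sqrt (2 * δ)) - 1) * V) := by
      linear_combination ((n:ℝ) * (Real.exp (β * Real.sqrt (2 * δ)) - 1)) * hsv
    exact h1.trans_eq h2
  have hErr : (2/(n:ℝ)) * ((sInf (Set.range s))⁻¹ *
      ((∑ k, Real.sqrt (‖θbar‖ ^ 2 - ⟪θbar, θ k⟫ ^ 2)) *
        ((Real.exp (β * Real.sqrt (2 * δ)) - 1) * Real.sqrt V))) ≤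
      2 * (Real.exp (β * Real.sqrt (2 * δ)) - 1) * (sInf (Set.range s))⁻¹ * V := by
    calc (2/(n:ℝ)) * ((sInf (Set.range s))⁻¹ *
        ((∑ k, Real.sqrt (‖θbar‖ ^ 2 - ⟪θbar, θ k⟫ ^ 2)) *
          ((Real.exp (β * Real.sqrt (2 * δ)) - 1) * Real.sqrt V)))
        ≤ (2/(n:ℝ)) * ((sInf (Set.range s))⁻¹ *
            ((n:ℝ) * ((Real.exp (β * Real.sqrt (2 * δ)) - 1) * V))) := by
          apply mul_le_mul_of_nonneg_left _ (by positivity : (0:ℝ) ≤ 2/(n:ℝ))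
          exact mul_le_mul_of_nonneg_left hT (inv_nonneg.2 hsmin_pos.le)
      _ = 2 * (Real.exp (β * Real.sqrt (2 * δ)) - 1) * (sInf (Set.range s))⁻¹ * V := by
          field_simp
  -- main-term estimate
  have hMainTerm : (2/(n:ℝ)) * ((sSup (Set.range s))⁻¹ *
      (-(∑ k, (‖θbar‖ ^ 2 - ⟪θbar, θ k⟫ ^ 2)))) ≤
      ((-2 + 2 * n * δ) / sSup (Set.range s)) * V := by
    have h := mul_le_mul_of_nonneg_left hMain (inv_nonneg.2 hsmax_pos.le)
    ring_nf at h ⊢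
    linarith only [h]
  have hLow : -(2 * (sInf (Set.range s))⁻¹ * V) ≤ (2/(n:ℝ)) * ((sInf (Set.range s))⁻¹ *
      (-(∑ k, (‖θbar‖ ^ 2 - ⟪θbar, θ k⟫ ^ 2)))) := by
    have h := mul_le_mul_of_nonneg_left hMsum_le
      (mul_nonneg (by positivity : (0:ℝ) ≤ 2/(n:ℝ)) (inv_nonneg.2 hsmin_pos.le))
    have hcanc : (2/(n:ℝ) * (sInf (Set.range s))⁻¹) * ((n:ℝ) * V)
        = 2 * (sInf (Set.range s))⁻¹ * V := by
      field_simp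
    rw [hcanc] at h
    ring_nf at h ⊢
    linarith only [h]
  constructor
  · rw [ge_iff_le, hD]
    calc (2/(n:ℝ)) * ∑ k, (s k)⁻¹ * ⟪θ k - θbar, sphereProj (θ k) (attnQK β Q K θ k)⟫
        ≤ (2/(n:ℝ)) * ((sSup (Set.range s))⁻¹ * (-(∑ k, (‖θbar‖ ^ 2 - ⟪θbar, θ k⟫ ^ 2))) +
            (sInf (Set.range s))⁻¹ * ((∑ k, Real.sqrt (‖θbar‖ ^ 2 - ⟪θbar, θ k⟫ ^ 2)) *
              ((Real.exp (β * Real.sqrt (2 * δ)) - 1) * Real.sqrt V))) :=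
          mul_le_mul_of_nonneg_left hsum_ub (by positivity)
      _ = (2/(n:ℝ)) * ((sSup (Set.range s))⁻¹ * (-(∑ k, (‖θbar‖ ^ 2 - ⟪θbar, θ k⟫ ^ 2)))) +
            (2/(n:ℝ)) * ((sInf (Set.range s))⁻¹ *
              ((∑ k, Real.sqrt (‖θbar‖ ^ 2 - ⟪θbar, θ k⟫ ^ 2)) *
                ((Real.exp (β * Real.sqrt (2 * δ)) - 1) * Real.sqrt V))) := by ring
      _ ≤ ((-2 + 2 * n * δ) / sSup (Set.range s)) * V +
            2 * (Real.exp (β * Real.sqrt (2 * δ)) - 1) * (sInf (Set.range s))⁻¹ * V :=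
          add_le_add hMainTerm hErr
      _ ≤ ((-2 + 2 * n * δ) / sSup (Set.range s)) * V +
            ((Real.sqrt 2 / (3 * Real.sqrt n)) / sInf (Set.range s)) * V := by
          have h := mul_le_mul_of_nonneg_right
            (mul_le_mul_of_nonneg_right hc (inv_nonneg.2 hsmin_pos.le)) hV0
          ring_nf at h ⊢
          linarith only [h]
  · rw [ge_iff_le, hD]
    have step1 : (2/(n:ℝ)) * ((sInf (Set.range s))⁻¹ *
        (-(∑ k, (‖θbar‖ ^ 2 - ⟪θbar, θ k⟫ ^ 2)) -
          (∑ k, Real.sqrt (‖θbar‖ ^ 2 - ⟪θbar, θ k⟫ ^ 2)) *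
            ((Real.exp (β * Real.sqrt (2 * δ)) - 1) * Real.sqrt V))) ≤
        (2/(n:ℝ)) * ∑ k, (s k)⁻¹ * ⟪θ k - θbar, sphereProj (θ k) (attnQK β Q K θ k)⟫ :=
      mul_le_mul_of_nonneg_left hsum_lb (by positivity)
    have hsplit : (2/(n:ℝ)) * ((sInf (Set.range s))⁻¹ *
        (-(∑ k, (‖θbar‖ ^ 2 - ⟪θbar, θ k⟫ ^ 2)) -
          (∑ k, Real.sqrt (‖θbar‖ ^ 2 - ⟪θbar, θ k⟫ ^ 2)) *
            ((Real.exp (β * Real.sqrt (2 * δ)) - 1) * Real.sqrt V)))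
        = (2/(n:ℝ)) * ((sInf (Set.range s))⁻¹ *
            (-(∑ k, (‖θbar‖ ^ 2 - ⟪θbar, θ k⟫ ^ 2)))) -
          (2/(n:ℝ)) * ((sInf (Set.range s))⁻¹ *
            ((∑ k, Real.sqrt (‖θbar‖ ^ 2 - ⟪θbar, θ k⟫ ^ 2)) *
              ((Real.exp (β * Real.sqrt (2 * δ)) - 1) * Real.sqrt V))) := by ring
    have h2c := mul_le_mul_of_nonneg_right
      (mul_le_mul_of_nonneg_right hc (inv_nonneg.2 hsmin_pos.le)) hV0
    generalize hG : (∑ k, (s k)⁻¹ * ⟪θ k - θbar, sphereProj (θ k) (attnQK β Q K θ k)⟫) = G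
      at step1 ⊢
    generalize hSM : (∑ k, (‖θbar‖ ^ 2 - ⟪θbar, θ k⟫ ^ 2)) = SM at step1 hsplit hLow
    generalize hSQ : (∑ k, Real.sqrt (‖θbar‖ ^ 2 - ⟪θbar, θ k⟫ ^ 2)) = SQ
      at step1 hsplit hErr
    ring_nf at step1 hsplit hErr hLow h2c ⊢
    linarith only [step1, hsplit, hErr, hLow, h2c]
end

section
/- Let n ≥ 1, β > 0, let Q, K ∈ ℝ^{d×d} satisfy ‖QᵀK‖_op ≤ 1, and let 0 < δ < 1/(100 n² β²). Suppose Θ : [0,∞) → (S^{d−1})ⁿ is a C¹ curve satisfying the Post-LN dynamics θ̇ⱼ(t) = P_{θⱼ(t)} Aⱼ(Θ(t)) for all j and t, and suppose that ⟨θᵢ(t), θⱼ(t)⟩ ≥ 1 − δ for all i, j and all t ≥ 0. Then the variance 𝒱(t) = 1 − ‖θ̄(t)‖², where θ̄(t) = (1/n)∑_j θⱼ(t), satisfies for all t ≥ 0: 𝒱(0) e^{−(2 + √2/(3√n)) t} ≤ 𝒱(t) ≤ 𝒱(0) e^{−(2 − 2nδ − √2/(3√n)) t}. -/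
open Filter Real
open scoped RealInnerProductSpace BigOperators

lemma sqrt2_le_15 : Real.sqrt 2 ≤ 1.5 := by
  nlinarith [Real.sq_sqrt (show (0:ℝ) ≤ 2 by norm_num), Real.sqrt_nonneg 2]

lemma softmax_dev {n : ℕ} [Nonempty (Fin n)] (hn0 : (0:ℝ) < n) (b : Fin n → ℝ) (s : ℝ)
    (hsp : ∀ k l, b k - b l ≤ s) (k : Fin n) :
    |Real.exp (b k) / (∑ l, Real.exp (b l)) - 1/n| ≤ (Real.exp s - 1)/n := by
  have hZ : 0 < ∑ l, Real.exp (b l) :=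
    Finset.sum_pos (fun l _ => Real.exp_pos _) Finset.univ_nonempty
  have hs0 : 0 ≤ s := le_trans (by linarith [hsp k k]) (hsp k k)
  have hub : Real.exp (b k) / (∑ l, Real.exp (b l)) ≤ Real.exp s / n := by
    rw [div_le_div_iff₀ hZ hn0]
    calc Real.exp (b k) * n = ∑ _l : Fin n, Real.exp (b k) := by
          rw [Finset.sum_const, Finset.card_univ, Fintype.card_fin, nsmul_eq_mul]; ring
      _ ≤ ∑ l, Real.exp s * Real.exp (b l) := by
          apply Finset.sum_le_sum
          intro l _
          rw [← Real.exp_add]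
          exact Real.exp_le_exp.2 (by linarith [hsp k l])
      _ = Real.exp s * ∑ l, Real.exp (b l) := by rw [Finset.mul_sum]
  have hlb : Real.exp (-s) / n ≤ Real.exp (b k) / (∑ l, Real.exp (b l)) := by
    rw [div_le_div_iff₀ hn0 hZ]
    calc Real.exp (-s) * ∑ l, Real.exp (b l) = ∑ l, Real.exp (-s) * Real.exp (b l) := by
          rw [Finset.mul_sum]
      _ ≤ ∑ _l : Fin n, Real.exp (b k) := by
          apply Finset.sum_le_sum
          intro l _
          rw [← Real.exp_add]
          exact Real.exp_le_exp.2 (by linarith [hsp l k])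
      _ = Real.exp (b k) * n := by
          rw [Finset.sum_const, Finset.card_univ, Fintype.card_fin, nsmul_eq_mul]; ring
  have hkey : (1 - Real.exp (-s))/n ≤ (Real.exp s - 1)/n := by
    apply div_le_div_of_nonneg_right ?_ hn0.le
    nlinarith [Real.add_one_le_exp s, Real.add_one_le_exp (-s)]
  rw [abs_le]
  constructor
  · have h2 : 1/(n:ℝ) - Real.exp (-s)/(n:ℝ) = (1 - Real.exp (-s))/(n:ℝ) := by rw [← sub_div]
    linarith
  · have : Real.exp (b k) / (∑ l, Real.exp (b l)) - 1/n ≤ Real.exp s/n - 1/n := by linarith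
    rw [← sub_div] at this
    exact this

lemma eps_key {n : ℕ} (hn1 : 1 ≤ (n:ℝ)) :
    Real.exp (Real.sqrt 2 / (10 * n)) - 1 ≤ Real.sqrt 2 / (6 * Real.sqrt n) := by
  set s : ℝ := Real.sqrt 2 / (10 * n) with hs_eq
  have hq1 : 1 ≤ Real.sqrt n := by
    rw [show (1:ℝ) = Real.sqrt 1 by rw [Real.sqrt_one]]
    exact Real.sqrt_le_sqrt hn1
  have hq2 : (Real.sqrt n)^2 = n := Real.sq_sqrt (by linarith)
  have hr1 : 1 ≤ Real.sqrt 2 := by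
    nlinarith [Real.sq_sqrt (show (0:ℝ) ≤ 2 by norm_num), Real.sqrt_nonneg 2]
  have hr2 : Real.sqrt 2 ≤ 1.5 := sqrt2_le_15
  have hs0 : 0 ≤ s := by positivity
  have hs15 : s ≤ 0.15 := by
    rw [hs_eq]
    calc Real.sqrt 2 / (10 * (n:ℝ)) ≤ 1.5 / 10 :=
          div_le_div₀ (by norm_num) hr2 (by norm_num) (by linarith)
      _ = 0.15 := by norm_num
  have hinv : 1 - s ≤ (Real.exp s)⁻¹ := by
    rw [← Real.exp_neg]; linarith [Real.add_one_le_exp (-s)]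
  have h1 : Real.exp s * (1 - s) ≤ 1 := by
    calc Real.exp s * (1 - s) ≤ Real.exp s * (Real.exp s)⁻¹ :=
          mul_le_mul_of_nonneg_left hinv (Real.exp_pos s).le
      _ = 1 := mul_inv_cancel₀ (Real.exp_pos s).ne'
  have hexp_ub : Real.exp s ≤ 20/17 := by nlinarith [Real.exp_pos s]
  have h2 : Real.exp s - 1 ≤ (20/17) * s := by nlinarith [Real.exp_pos s]
  have h3 : (20/17) * s ≤ Real.sqrt 2 / (6 * Real.sqrt n) := by
    rw [hs_eq, show (20/17 : ℝ) * (Real.sqrt 2 / (10 * n)) = (2 * Real.sqrt 2) / (17 * n) by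
      field_simp; ring]
    rw [div_le_div_iff₀ (by positivity) (by positivity)]
    nlinarith [hq2, hq1, hr1, Real.sqrt_nonneg (n:ℝ)]
  linarith

set_option maxHeartbeats 2000000 in
lemma core_bound {d n : ℕ} (hn : 1 ≤ n) (β : ℝ) (hβ : 0 < β)
    (Q K : EuclideanSpace ℝ (Fin d) →L[ℝ] EuclideanSpace ℝ (Fin d))
    (hQK : ‖(ContinuousLinearMap.adjoint Q).comp K‖ ≤ 1)
    (δ : ℝ) (hδ : 0 < δ) (hδ' : δ < 1 / (100 * n ^ 2 * β ^ 2))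
    (u : Fin n → EuclideanSpace ℝ (Fin d)) (hu : ∀ j, ‖u j‖ = 1)
    (hcone : ∀ i j, 1 - δ ≤ ⟪u i, u j⟫) :
    (2 - 2 * n * δ - Real.sqrt 2 / (3 * Real.sqrt n)) * (1 - ‖(n : ℝ)⁻¹ • ∑ j, u j‖ ^ 2) ≤
      (2 / n) * ∑ j, ⟪(n : ℝ)⁻¹ • ∑ i, u i, sphereProj (u j) (attnQK β Q K u j)⟫ ∧
    (2 / n) * ∑ j, ⟪(n : ℝ)⁻¹ • ∑ i, u i, sphereProj (u j) (attnQK β Q K u j)⟫ ≤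
      (2 + Real.sqrt 2 / (3 * Real.sqrt n)) * (1 - ‖(n : ℝ)⁻¹ • ∑ j, u j‖ ^ 2) := by
  have hn0 : (0:ℝ) < n := by exact_mod_cast Nat.pos_of_ne_zero (by omega)
  have hn1 : (1:ℝ) ≤ n := by exact_mod_cast hn
  haveI : Nonempty (Fin n) := ⟨⟨0, hn⟩⟩
  obtain ⟨m, hm⟩ : ∃ y : EuclideanSpace ℝ (Fin d), y = (n : ℝ)⁻¹ • ∑ i, u i := ⟨_, rfl⟩
  rw [← hm]
  have hsum_eq : ∑ i, u i = (n:ℝ) • m := by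
    rw [hm, smul_smul, mul_inv_cancel₀ hn0.ne', one_smul]
  have hinner_sum : ∑ j, ⟪m, u j⟫ = n * ‖m‖^2 := by
    rw [← inner_sum, hsum_eq, real_inner_smul_right, real_inner_self_eq_norm_sq]
  have hmu_lb : ∀ j, 1 - δ ≤ ⟪m, u j⟫ := by
    intro j
    have h0 : ⟪m, u j⟫ = (n:ℝ)⁻¹ * ∑ i, ⟪u i, u j⟫ := by
      rw [hm, real_inner_smul_left, sum_inner]
    rw [h0]
    have h1 : (n:ℝ) * (1 - δ) ≤ ∑ i, ⟪u i, u j⟫ := by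
      calc (n:ℝ) * (1 - δ) = ∑ _i : Fin n, (1 - δ) := by
            rw [Finset.sum_const, Finset.card_univ, Fintype.card_fin, nsmul_eq_mul]
        _ ≤ ∑ i, ⟪u i, u j⟫ := Finset.sum_le_sum fun i _ => hcone i j
    calc 1 - δ = (n:ℝ)⁻¹ * ((n:ℝ) * (1 - δ)) := by field_simp
      _ ≤ (n:ℝ)⁻¹ * ∑ i, ⟪u i, u j⟫ := by
          apply mul_le_mul_of_nonneg_left h1 (by positivity)
  have hm_le : ‖m‖ ≤ 1 := by
    rw [hm]
    calc ‖(n:ℝ)⁻¹ • ∑ i, u i‖ = (n:ℝ)⁻¹ * ‖∑ i, u i‖ := by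
          rw [norm_smul, Real.norm_eq_abs, abs_of_pos (by positivity)]
      _ ≤ (n:ℝ)⁻¹ * (n:ℝ) := by
          apply mul_le_mul_of_nonneg_left _ (by positivity)
          calc ‖∑ i, u i‖ ≤ ∑ i, ‖u i‖ := norm_sum_le _ _
            _ = (n:ℝ) := by simp [hu]
      _ = 1 := by field_simp
  obtain ⟨Vv, hVv⟩ : ∃ y : ℝ, y = 1 - ‖m‖^2 := ⟨_, rfl⟩
  rw [← hVv]
  have hV0 : 0 ≤ Vv := by rw [hVv]; nlinarith [norm_nonneg m]
  have hmsq_lb : 1 - δ ≤ ‖m‖^2 := by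
    have h2 : (n:ℝ) * (1 - δ) ≤ ∑ j, ⟪m, u j⟫ := by
      calc (n:ℝ) * (1 - δ) = ∑ _j : Fin n, (1 - δ) := by
            rw [Finset.sum_const, Finset.card_univ, Fintype.card_fin, nsmul_eq_mul]
        _ ≤ _ := Finset.sum_le_sum fun j _ => hmu_lb j
    rw [hinner_sum] at h2
    nlinarith
  have hVδ : Vv ≤ δ := by rw [hVv]; linarith
  obtain ⟨x, hx⟩ : ∃ f : Fin n → ℝ, f = fun j => ⟪m, u j⟫ - ‖m‖^2 := ⟨_, rfl⟩
  have hxsum : ∑ j, x j = 0 := by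
    simp only [hx]
    rw [Finset.sum_sub_distrib, hinner_sum, Finset.sum_const, Finset.card_univ,
      Fintype.card_fin, nsmul_eq_mul]
    ring
  have hxub : ∀ j, x j ≤ Vv := by
    intro j
    have h1 : ⟪m, u j⟫ ≤ ‖m‖ := by
      have h2 := real_inner_le_norm m (u j); rw [hu j] at h2; linarith [h2]
    simp only [hx, hVv]
    nlinarith [norm_nonneg m]
  have hxlb : ∀ j, Vv - δ ≤ x j := by
    intro j
    simp only [hx, hVv]
    have := hmu_lb j
    linarith
  have hsumsq : ∑ j, x j ^ 2 ≤ n * ((δ - Vv) * Vv) := by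
    calc ∑ j, x j ^ 2 ≤ ∑ j, ((2 * Vv - δ) * x j + (δ - Vv) * Vv) := by
          apply Finset.sum_le_sum
          intro j _
          nlinarith [mul_nonneg (sub_nonneg.2 (hxlb j)) (sub_nonneg.2 (hxub j))]
      _ = (2 * Vv - δ) * ∑ j, x j + (n:ℝ) * ((δ - Vv) * Vv) := by
          rw [Finset.sum_add_distrib, ← Finset.mul_sum, Finset.sum_const, Finset.card_univ,
            Fintype.card_fin, nsmul_eq_mul]
      _ = n * ((δ - Vv) * Vv) := by rw [hxsum]; ring
  -- weights
  have hβδ : β^2 * δ < 1 / (100 * n^2) := by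
    rw [lt_div_iff₀ (by positivity)] at hδ' ⊢
    calc β^2 * δ * (100 * (n:ℝ)^2) = δ * (100 * n^2 * β^2) := by ring
      _ < 1 := hδ'
  obtain ⟨a, ha⟩ : ∃ f : Fin n → Fin n → ℝ, f = fun j k => β * ⟪Q (u j), K (u k)⟫ := ⟨_, rfl⟩
  obtain ⟨sp, hsp_eq⟩ : ∃ y : ℝ, y = Real.sqrt 2 / (10 * n) := ⟨_, rfl⟩
  have hsp0 : 0 ≤ sp := by rw [hsp_eq]; positivity
  have hspread : ∀ j k l, a j k - a j l ≤ sp := by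
    intro j k l
    have h1 : a j k - a j l = β * ⟪u j, ((ContinuousLinearMap.adjoint Q).comp K) (u k - u l)⟫ := by
      simp only [ha]
      rw [ContinuousLinearMap.comp_apply, map_sub, ContinuousLinearMap.adjoint_inner_right,
        inner_sub_right]
      ring
    have h2 : |⟪u j, ((ContinuousLinearMap.adjoint Q).comp K) (u k - u l)⟫| ≤ ‖u k - u l‖ := by
      calc |⟪u j, ((ContinuousLinearMap.adjoint Q).comp K) (u k - u l)⟫|
          ≤ ‖u j‖ * ‖((ContinuousLinearMap.adjoint Q).comp K) (u k - u l)‖ :=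
            abs_real_inner_le_norm _ _
        _ ≤ 1 * (‖(ContinuousLinearMap.adjoint Q).comp K‖ * ‖u k - u l‖) := by
            rw [hu j]
            exact mul_le_mul_of_nonneg_left (ContinuousLinearMap.le_opNorm _ _) (by norm_num)
        _ ≤ 1 * (1 * ‖u k - u l‖) := by
            apply mul_le_mul_of_nonneg_left _ (by norm_num)
            exact mul_le_mul_of_nonneg_right hQK (norm_nonneg _)
        _ = ‖u k - u l‖ := by ring
    have h3 : (β * ‖u k - u l‖)^2 ≤ sp^2 := by
      have hns : ‖u k - u l‖^2 = 2 - 2 * ⟪u k, u l⟫ := by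
        rw [norm_sub_sq_real, hu k, hu l]; ring
      have h6 : sp^2 = 2 * (1 / (100 * n^2)) := by
        rw [hsp_eq, div_pow, Real.sq_sqrt (by norm_num : (0:ℝ) ≤ 2)]
        ring
      have h7 : (2:ℝ) * (β^2*δ) ≤ 2 * (1/(100*n^2)) := by linarith
      rw [mul_pow, hns, h6]
      nlinarith [hcone k l, sq_nonneg β]
    have h7 : β * ‖u k - u l‖ ≤ sp := by
      nlinarith [mul_nonneg hβ.le (norm_nonneg (u k - u l)), hsp0]
    calc a j k - a j l = β * ⟪u j, ((ContinuousLinearMap.adjoint Q).comp K) (u k - u l)⟫ := h1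
      _ ≤ β * |⟪u j, ((ContinuousLinearMap.adjoint Q).comp K) (u k - u l)⟫| :=
          mul_le_mul_of_nonneg_left (le_abs_self _) hβ.le
      _ ≤ β * ‖u k - u l‖ := mul_le_mul_of_nonneg_left h2 hβ.le
      _ ≤ sp := h7
  obtain ⟨w, hw⟩ : ∃ f : Fin n → Fin n → ℝ,
      f = fun j k => Real.exp (a j k) / (∑ l, Real.exp (a j l)) := ⟨_, rfl⟩
  obtain ⟨ε, hε⟩ : ∃ y : ℝ, y = (Real.exp sp - 1) / n := ⟨_, rfl⟩
  have hε0 : 0 ≤ ε := by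
    rw [hε]
    have h1 := Real.one_le_exp hsp0
    have h2 : 0 ≤ Real.exp sp - 1 := by linarith
    positivity
  have hw_dev : ∀ j k, |w j k - 1/n| ≤ ε := by
    intro j k
    simp only [hw, hε]
    exact softmax_dev hn0 (a j) sp (hspread j) k
  have hw_sum : ∀ j, ∑ k, w j k = 1 := by
    intro j
    have hZ : 0 < ∑ l, Real.exp (a j l) :=
      Finset.sum_pos (fun l _ => Real.exp_pos _) Finset.univ_nonempty
    simp only [hw]
    rw [← Finset.sum_div, div_self hZ.ne']
  have hε_key : ε * n ≤ Real.sqrt 2 / (6 * Real.sqrt n) := by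
    rw [hε, div_mul_cancel₀ _ hn0.ne', hsp_eq]
    exact eps_key hn1
  -- attention = weighted average
  have hattn : ∀ j, attnQK β Q K u j = ∑ k, w j k • u k := by
    intro j
    simp only [attnQK, hw, ha, Finset.smul_sum, smul_smul, div_eq_inv_mul]
  -- deviation vectors
  obtain ⟨Ej, hEj⟩ : ∃ f : Fin n → EuclideanSpace ℝ (Fin d),
      f = fun j => attnQK β Q K u j - m := ⟨_, rfl⟩
  have hEj_eq : ∀ j, Ej j = ∑ k, (w j k - 1/n) • (u k - m) := by
    intro j
    have h1 : ∑ k, (w j k - 1/n) • (u k - m)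
        = (∑ k, w j k • u k) - (∑ k, w j k • m) - ((∑ k, ((1:ℝ)/n) • u k)
          - ∑ _k : Fin n, ((1:ℝ)/n) • m) := by
      rw [← Finset.sum_sub_distrib, ← Finset.sum_sub_distrib, ← Finset.sum_sub_distrib]
      apply Finset.sum_congr rfl
      intro k _
      module
    have h2 : (∑ k, w j k • m) = m := by
      rw [← Finset.sum_smul, hw_sum j, one_smul]
    have h3 : (∑ k, ((1:ℝ)/n) • u k) = m := by
      rw [← Finset.smul_sum, hm, one_div]
    have h4 : (∑ _k : Fin n, ((1:ℝ)/n) • m) = m := by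
      rw [Finset.sum_const, Finset.card_univ, Fintype.card_fin,
        ← Nat.cast_smul_eq_nsmul ℝ, smul_smul,
        show (n:ℝ) * ((1:ℝ)/n) = 1 by field_simp, one_smul]
    simp only [hEj]
    rw [hattn j, h1, h2, h3, h4]
    abel
  have hEnorm : ∀ j, ‖Ej j‖ ≤ ε * ∑ k, ‖u k - m‖ := by
    intro j
    rw [hEj_eq j]
    calc ‖∑ k, (w j k - 1/n) • (u k - m)‖ ≤ ∑ k, ‖(w j k - 1/n) • (u k - m)‖ :=
          norm_sum_le _ _
      _ = ∑ k, |w j k - 1/n| * ‖u k - m‖ := by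
          apply Finset.sum_congr rfl
          intro k _
          rw [norm_smul, Real.norm_eq_abs]
      _ ≤ ∑ k, ε * ‖u k - m‖ := by
          apply Finset.sum_le_sum
          intro k _
          exact mul_le_mul_of_nonneg_right (hw_dev j k) (norm_nonneg _)
      _ = ε * ∑ k, ‖u k - m‖ := by rw [Finset.mul_sum]
  have hsum_inner' : ∑ k, ⟪u k, m⟫ = n * ‖m‖^2 := by
    rw [← sum_inner, hsum_eq, real_inner_smul_left, real_inner_self_eq_norm_sq]
  have hsum_sq : ∑ k, ‖u k - m‖^2 = n * Vv := by
    calc ∑ k, ‖u k - m‖^2 = ∑ k : Fin n, (1 - 2*⟪u k, m⟫ + ‖m‖^2) := by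
          apply Finset.sum_congr rfl
          intro k _
          rw [norm_sub_sq_real, hu k]; ring
      _ = (n:ℝ) - 2*((n:ℝ)*‖m‖^2) + (n:ℝ)*‖m‖^2 := by
          rw [Finset.sum_add_distrib, Finset.sum_sub_distrib, ← Finset.mul_sum, hsum_inner',
            Finset.sum_const, Finset.sum_const, Finset.card_univ, Fintype.card_fin,
            nsmul_eq_mul, nsmul_eq_mul, mul_one]
      _ = n * Vv := by rw [hVv]; ring
  have hT : (∑ k, ‖u k - m‖)^2 ≤ (n:ℝ) * ((n:ℝ) * Vv) := by
    calc (∑ k, ‖u k - m‖)^2 ≤ (Finset.univ.card : ℝ) * ∑ k, ‖u k - m‖^2 :=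
          sq_sum_le_card_mul_sum_sq
      _ = (n:ℝ) * ((n:ℝ) * Vv) := by rw [Finset.card_univ, Fintype.card_fin, hsum_sq]
  obtain ⟨Pv, hPv⟩ : ∃ f : Fin n → EuclideanSpace ℝ (Fin d),
      f = fun j => m - ⟪m, u j⟫ • u j := ⟨_, rfl⟩
  have hPnorm : ∀ j, ‖Pv j‖ ≤ ‖u j - m‖ := by
    intro j
    have h1 : ‖Pv j‖^2 = ‖m‖^2 - ⟪m, u j⟫^2 := by
      simp only [hPv]
      rw [norm_sub_sq_real, real_inner_smul_right, norm_smul, Real.norm_eq_abs, mul_pow,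
        sq_abs, hu j]
      ring
    have h2 : ‖u j - m‖^2 = 1 - 2*⟪u j, m⟫ + ‖m‖^2 := by
      rw [norm_sub_sq_real, hu j]; ring
    have h3 : ⟪u j, m⟫ = ⟪m, u j⟫ := real_inner_comm _ _
    nlinarith [norm_nonneg (Pv j), norm_nonneg (u j - m), sq_nonneg (1 - ⟪m, u j⟫)]
  obtain ⟨R, hR⟩ : ∃ y : ℝ, y = ∑ j, ⟪Ej j, Pv j⟫ := ⟨_, rfl⟩
  have hRabs : |R| ≤ ε * ((n:ℝ) * ((n:ℝ) * Vv)) := by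
    have hTnn : 0 ≤ ∑ k, ‖u k - m‖ := Finset.sum_nonneg fun k _ => norm_nonneg _
    rw [hR]
    calc |∑ j, ⟪Ej j, Pv j⟫| ≤ ∑ j, |⟪Ej j, Pv j⟫| := Finset.abs_sum_le_sum_abs _ _
      _ ≤ ∑ j, (ε * ∑ k, ‖u k - m‖) * ‖u j - m‖ := by
          apply Finset.sum_le_sum
          intro j _
          calc |⟪Ej j, Pv j⟫| ≤ ‖Ej j‖ * ‖Pv j‖ := abs_real_inner_le_norm _ _
            _ ≤ (ε * ∑ k, ‖u k - m‖) * ‖u j - m‖ :=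
                mul_le_mul (hEnorm j) (hPnorm j) (norm_nonneg _)
                  (mul_nonneg hε0 hTnn)
      _ = ε * ((∑ k, ‖u k - m‖) * (∑ j, ‖u j - m‖)) := by
          rw [← Finset.mul_sum]; ring
      _ ≤ ε * ((n:ℝ) * ((n:ℝ) * Vv)) := by
          apply mul_le_mul_of_nonneg_left _ hε0
          nlinarith [hT]
  have hid : ∀ j, ⟪m, sphereProj (u j) (attnQK β Q K u j)⟫
      = (‖m‖^2 - ⟪m, u j⟫^2) + ⟪Ej j, Pv j⟫ := by
    intro j
    have hA : attnQK β Q K u j = m + Ej j := by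
      simp only [hEj]; abel
    have hPj : Pv j = m - ⟪m, u j⟫ • u j := by simp only [hPv]
    rw [sphereProj, hA, hPj]
    simp only [inner_sub_right, inner_add_right, inner_add_left, real_inner_smul_right,
      real_inner_self_eq_norm_sq]
    rw [real_inner_comm (Ej j) m]
    ring
  have hmain : ∑ j, ⟪m, sphereProj (u j) (attnQK β Q K u j)⟫
      = ((n:ℝ) * ((1-Vv)*Vv) - ∑ j, x j^2) + R := by
    rw [Finset.sum_congr rfl (fun j _ => hid j), Finset.sum_add_distrib, hR]
    congr 1
    calc ∑ j, (‖m‖^2 - ⟪m, u j⟫^2)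
        = ∑ j, (((1-Vv)*Vv - x j^2) - 2*(1-Vv)*x j) := by
          apply Finset.sum_congr rfl
          intro j _
          simp only [hx, hVv]
          ring
      _ = (n:ℝ) * ((1-Vv)*Vv) - ∑ j, x j^2 := by
          rw [Finset.sum_sub_distrib, Finset.sum_sub_distrib, Finset.sum_const,
            Finset.card_univ, Fintype.card_fin, nsmul_eq_mul, ← Finset.mul_sum, hxsum]
          ring
  -- final inequalities
  obtain ⟨c2, hc2def⟩ : ∃ y : ℝ, y = Real.sqrt 2 / (6 * Real.sqrt n) := ⟨_, rfl⟩
  have hsqn : 0 < Real.sqrt n := Real.sqrt_pos.mpr hn0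
  have hc2 : Real.sqrt 2 / (3 * Real.sqrt n) = 2 * c2 := by
    rw [hc2def]
    field_simp
    ring
  have hXnn : 0 ≤ ∑ j, x j^2 := Finset.sum_nonneg fun j _ => sq_nonneg _
  have hRlb : -(ε * ((n:ℝ) * ((n:ℝ) * Vv))) ≤ R := (abs_le.mp hRabs).1
  have hRub : R ≤ ε * ((n:ℝ) * ((n:ℝ) * Vv)) := (abs_le.mp hRabs).2
  rw [hc2]
  rw [← hc2def] at hε_key
  constructor
  · rw [div_mul_eq_mul_div, le_div_iff₀ hn0]
    have t1 : 0 ≤ 2*((n:ℝ)*(δ*Vv))*((n:ℝ)-1) := by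
      apply mul_nonneg (mul_nonneg (by norm_num) _) (by linarith)
      exact mul_nonneg hn0.le (mul_nonneg hδ.le hV0)
    have t2 : 0 ≤ 2*((n:ℝ)*Vv)*(c2 - ε*(n:ℝ)) := by
      apply mul_nonneg (mul_nonneg (by norm_num) (mul_nonneg hn0.le hV0))
      linarith [hε_key]
    have t3 : 0 ≤ 2*((n:ℝ)*((δ-Vv)*Vv) - ∑ j, x j^2) := by linarith [hsumsq]
    have t4 : 0 ≤ 2*(R + ε*((n:ℝ)*((n:ℝ)*Vv))) := by linarith [hRlb]
    linarith [hmain, t1, t2, t3, t4]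
  · rw [div_mul_eq_mul_div, div_le_iff₀ hn0]
    have s1 : 0 ≤ 2*((n:ℝ)*(Vv*Vv)) := by positivity
    have s2 : 0 ≤ 2*(∑ j, x j^2) := by linarith
    have s3 : 0 ≤ 2*((n:ℝ)*Vv)*(c2 - ε*(n:ℝ)) := by
      apply mul_nonneg (mul_nonneg (by norm_num) (mul_nonneg hn0.le hV0))
      linarith [hε_key]
    have s4 : 0 ≤ 2*(ε*((n:ℝ)*((n:ℝ)*Vv)) - R) := by linarith [hRub]
    linarith [hmain, s1, s2, s3, s4]


lemma gronwall_upper (V : ℝ → ℝ) (r : ℝ)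
    (hd : ∀ s : ℝ, 0 ≤ s → ∃ D, HasDerivAt V D s ∧ D ≤ r * V s)
    (t : ℝ) (ht : 0 ≤ t) : V t ≤ V 0 * Real.exp (r * t) := by
  have hg : AntitoneOn (fun s => V s * Real.exp (-r * s)) (Set.Ici (0:ℝ)) := by
    apply antitoneOn_of_deriv_nonpos (convex_Ici 0)
    · intro s hs
      obtain ⟨D, hD, _⟩ := hd s hs
      exact (hD.continuousAt.mul
        (Real.continuous_exp.comp (continuous_const.mul continuous_id)).continuousAt).continuousWithinAt
    · intro s hs
      rw [interior_Ici] at hs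
      obtain ⟨D, hD, _⟩ := hd s (le_of_lt hs)
      exact ((hD.mul (((hasDerivAt_id s).const_mul (-r)).exp)).differentiableAt).differentiableWithinAt
    · intro s hs
      rw [interior_Ici] at hs
      obtain ⟨D, hD, hDle⟩ := hd s (le_of_lt hs)
      have hder : HasDerivAt (fun s => V s * Real.exp (-r * s))
          (D * Real.exp (-r * s) + V s * (Real.exp (-r * s) * (-r * 1))) s :=
        hD.mul (((hasDerivAt_id s).const_mul (-r)).exp)
      rw [hder.deriv]
      nlinarith [mul_le_mul_of_nonneg_left hDle (Real.exp_pos (-r * s)).le]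
  have h1 : V t * Real.exp (-r * t) ≤ V 0 * Real.exp (-r * 0) :=
    hg Set.self_mem_Ici (Set.mem_Ici.2 ht) ht
  have h2 : Real.exp (-r * 0) = 1 := by norm_num
  rw [h2, mul_one] at h1
  calc V t = V t * Real.exp (-r * t) * Real.exp (r * t) := by
        rw [mul_assoc, ← Real.exp_add, neg_mul, neg_add_cancel, Real.exp_zero, mul_one]
    _ ≤ V 0 * Real.exp (r * t) := mul_le_mul_of_nonneg_right h1 (Real.exp_pos _).le

lemma gronwall_lower (V : ℝ → ℝ) (l : ℝ)
    (hd : ∀ s : ℝ, 0 ≤ s → ∃ D, HasDerivAt V D s ∧ l * V s ≤ D)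
    (t : ℝ) (ht : 0 ≤ t) : V 0 * Real.exp (l * t) ≤ V t := by
  have hg : MonotoneOn (fun s => V s * Real.exp (-l * s)) (Set.Ici (0:ℝ)) := by
    apply monotoneOn_of_deriv_nonneg (convex_Ici 0)
    · intro s hs
      obtain ⟨D, hD, _⟩ := hd s hs
      exact (hD.continuousAt.mul
        (Real.continuous_exp.comp (continuous_const.mul continuous_id)).continuousAt).continuousWithinAt
    · intro s hs
      rw [interior_Ici] at hs
      obtain ⟨D, hD, _⟩ := hd s (le_of_lt hs)
      exact ((hD.mul (((hasDerivAt_id s).const_mul (-l)).exp)).differentiableAt).differentiableWithinAt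
    · intro s hs
      rw [interior_Ici] at hs
      obtain ⟨D, hD, hDle⟩ := hd s (le_of_lt hs)
      have hder : HasDerivAt (fun s => V s * Real.exp (-l * s))
          (D * Real.exp (-l * s) + V s * (Real.exp (-l * s) * (-l * 1))) s :=
        hD.mul (((hasDerivAt_id s).const_mul (-l)).exp)
      rw [hder.deriv]
      nlinarith [mul_le_mul_of_nonneg_left hDle (Real.exp_pos (-l * s)).le]
  have h1 : V 0 * Real.exp (-l * 0) ≤ V t * Real.exp (-l * t) :=
    hg Set.self_mem_Ici (Set.mem_Ici.2 ht) ht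
  have h2 : Real.exp (-l * 0) = 1 := by norm_num
  rw [h2, mul_one] at h1
  calc V 0 * Real.exp (l * t) ≤ V t * Real.exp (-l * t) * Real.exp (l * t) :=
        mul_le_mul_of_nonneg_right h1 (Real.exp_pos _).le
    _ = V t := by
        rw [mul_assoc, ← Real.exp_add, neg_mul, neg_add_cancel, Real.exp_zero, mul_one]

set_option maxHeartbeats 1000000 in
/-- exponential variance decay for Post-LN in a local cone. -/
theorem postLN_variance_decay (d n : ℕ) (hn : 1 ≤ n) (β : ℝ) (hβ : 0 < β)
    (Q K : EuclideanSpace ℝ (Fin d) →L[ℝ] EuclideanSpace ℝ (Fin d))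
    (hQK : ‖(ContinuousLinearMap.adjoint Q).comp K‖ ≤ 1)
    (δ : ℝ) (hδ : 0 < δ) (hδ' : δ < 1 / (100 * n ^ 2 * β ^ 2))
    (θ : ℝ → Fin n → EuclideanSpace ℝ (Fin d))
    (hnorm : ∀ t, 0 ≤ t → ∀ j, ‖θ t j‖ = 1)
    (hdyn : ∀ t, 0 ≤ t → ∀ j, HasDerivAt (fun s => θ s j)
      (sphereProj (θ t j) (attnQK β Q K (θ t) j)) t)
    (hcone : ∀ t, 0 ≤ t → ∀ i j : Fin n, 1 - δ ≤ ⟪θ t i, θ t j⟫)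
    (V : ℝ → ℝ) (hV : ∀ t, V t = 1 - ‖(n : ℝ)⁻¹ • ∑ j, θ t j‖ ^ 2) :
    ∀ t, 0 ≤ t →
      V 0 * Real.exp (-(2 + Real.sqrt 2 / (3 * Real.sqrt n)) * t) ≤ V t ∧
      V t ≤ V 0 * Real.exp (-(2 - 2 * n * δ - Real.sqrt 2 / (3 * Real.sqrt n)) * t) := by
  have key : ∀ s : ℝ, 0 ≤ s → ∃ D, HasDerivAt V D s ∧
      (2 - 2 * n * δ - Real.sqrt 2 / (3 * Real.sqrt n)) * V s ≤ -D ∧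
      -D ≤ (2 + Real.sqrt 2 / (3 * Real.sqrt n)) * V s := by
    intro s hs
    have hf : HasDerivAt (fun r => (n:ℝ)⁻¹ • ∑ j, θ r j)
        ((n:ℝ)⁻¹ • ∑ j, sphereProj (θ s j) (attnQK β Q K (θ s) j)) s := by
      exact (HasDerivAt.fun_sum (fun j _ => hdyn s hs j)).const_smul (n:ℝ)⁻¹
    refine ⟨-((2 / n) * ∑ j, ⟪(n:ℝ)⁻¹ • ∑ i, θ s i,
        sphereProj (θ s j) (attnQK β Q K (θ s) j)⟫), ?_, ?_, ?_⟩
    · have hVfun : V = fun r => 1 - ‖(n:ℝ)⁻¹ • ∑ j, θ r j‖^2 := funext hV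
      have heq : (fun r : ℝ => 1 - ‖(n:ℝ)⁻¹ • ∑ j, θ r j‖^2)
          = fun r => 1 - ⟪(n:ℝ)⁻¹ • ∑ j, θ r j, (n:ℝ)⁻¹ • ∑ j, θ r j⟫ := by
        funext r
        rw [real_inner_self_eq_norm_sq]
      have hder := (HasDerivAt.inner ℝ hf hf).const_sub 1
      rw [← heq, ← hVfun] at hder
      have e2 : ⟪(n:ℝ)⁻¹ • ∑ j, sphereProj (θ s j) (attnQK β Q K (θ s) j), (n:ℝ)⁻¹ • ∑ j, θ s j⟫
          = (n:ℝ)⁻¹ * ∑ j, ⟪(n:ℝ)⁻¹ • ∑ i, θ s i, sphereProj (θ s j) (attnQK β Q K (θ s) j)⟫ := by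
        rw [real_inner_comm, real_inner_smul_right, inner_sum]
      have e1 : ⟪(n:ℝ)⁻¹ • ∑ j, θ s j, (n:ℝ)⁻¹ • ∑ j, sphereProj (θ s j) (attnQK β Q K (θ s) j)⟫
          = (n:ℝ)⁻¹ * ∑ j, ⟪(n:ℝ)⁻¹ • ∑ i, θ s i, sphereProj (θ s j) (attnQK β Q K (θ s) j)⟫ := by
        rw [real_inner_smul_right, inner_sum]
      refine hder.congr_deriv ?_
      rw [div_eq_mul_inv]
      linear_combination -e1 - e2
    · rw [neg_neg, hV s]
      exact (core_bound hn β hβ Q K hQK δ hδ hδ' (θ s) (hnorm s hs) (hcone s hs)).1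
    · rw [neg_neg, hV s]
      exact (core_bound hn β hβ Q K hQK δ hδ hδ' (θ s) (hnorm s hs) (hcone s hs)).2
  intro t ht
  constructor
  · apply gronwall_lower V _ _ t ht
    intro s hs
    obtain ⟨D, hD, h1, _⟩ := key s hs
    exact ⟨D, hD, by linarith⟩
  · apply gronwall_upper V _ _ t ht
    intro s hs
    obtain ⟨D, hD, _, h2⟩ := key s hs
    exact ⟨D, hD, by linarith⟩
end

section
/- Let n ≥ 1, β > 0, δ ∈ (0,1), and let Q, K ∈ ℝ^{d×d} satisfy ‖QᵀK‖_op ≤ 1. Let θ₁, …, θₙ ∈ S^{d−1} satisfy ⟨θᵢ, θⱼ⟩ ≥ 1 − δ for all i, j, and let w_{kj} = exp(β⟨Qθₖ, Kθⱼ⟩)/∑_{l=1}^n exp(β⟨Qθₖ, Kθ_l⟩) be the softmax attention weights. Then for all k, j ∈ {1,…,n}: | w_{kj} − 1/n | ≤ (1/n)( e^{β√(2δ)} − 1 ). -/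
open Filter Real
open scoped RealInnerProductSpace BigOperators

/-- softmax attention weights are nearly uniform in a local cone. -/
theorem softmax_weights_nearly_uniform (d n : ℕ) (hn : 1 ≤ n) (β : ℝ) (hβ : 0 < β)
    (δ : ℝ) (hδ : δ ∈ Set.Ioo (0 : ℝ) 1)
    (Q K : EuclideanSpace ℝ (Fin d) →L[ℝ] EuclideanSpace ℝ (Fin d))
    (hQK : ‖(ContinuousLinearMap.adjoint Q).comp K‖ ≤ 1)
    (θ : Fin n → EuclideanSpace ℝ (Fin d)) (hθ : ∀ j, ‖θ j‖ = 1)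
    (hcone : ∀ i j : Fin n, 1 - δ ≤ ⟪θ i, θ j⟫) :
    ∀ k j : Fin n,
      |Real.exp (β * ⟪Q (θ k), K (θ j)⟫) / (∑ l, Real.exp (β * ⟪Q (θ k), K (θ l)⟫)) -
          1 / n| ≤
        (1 / n) * (Real.exp (β * Real.sqrt (2 * δ)) - 1) := by
  intro k j
  set ε := Real.sqrt (2 * δ) with hεdef
  have hεnn : 0 ≤ ε := Real.sqrt_nonneg _
  have hnpos : (0:ℝ) < n := by exact_mod_cast hn
  set M := (ContinuousLinearMap.adjoint Q).comp K with hM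
  have hdist : ∀ a b : Fin n, ‖θ a - θ b‖ ≤ ε := by
    intro a b
    have h2 : ‖θ a - θ b‖ ^ 2 ≤ 2 * δ := by
      rw [norm_sub_sq_real, hθ a, hθ b]
      nlinarith [hcone a b]
    calc ‖θ a - θ b‖ = Real.sqrt (‖θ a - θ b‖ ^ 2) :=
          (Real.sqrt_sq (norm_nonneg _)).symm
      _ ≤ ε := Real.sqrt_le_sqrt h2
  have hscore : ∀ a b : Fin n,
      |⟪Q (θ k), K (θ a)⟫ - ⟪Q (θ k), K (θ b)⟫| ≤ ε := by
    intro a b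
    have heq : ⟪Q (θ k), K (θ a)⟫ - ⟪Q (θ k), K (θ b)⟫ = ⟪θ k, M (θ a - θ b)⟫ := by
      simp [hM, ContinuousLinearMap.comp_apply, map_sub, inner_sub_right,
        ContinuousLinearMap.adjoint_inner_right]
    rw [heq]
    calc |⟪θ k, M (θ a - θ b)⟫| ≤ ‖θ k‖ * ‖M (θ a - θ b)‖ := abs_real_inner_le_norm _ _
      _ ≤ 1 * (‖M‖ * ‖θ a - θ b‖) := by
          rw [hθ k, one_mul, one_mul]; exact M.le_opNorm _
      _ ≤ 1 * (1 * ε) := by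
          rw [one_mul, one_mul]
          exact mul_le_mul hQK (hdist a b) (norm_nonneg _) zero_le_one
      _ = ε := by ring
  set s : Fin n → ℝ := fun l => β * ⟪Q (θ k), K (θ l)⟫ with hs
  have hsd : ∀ l, |s j - s l| ≤ β * ε := by
    intro l
    have := hscore j l
    have : |β * ⟪Q (θ k), K (θ j)⟫ - β * ⟪Q (θ k), K (θ l)⟫| ≤ β * ε := by
      rw [← mul_sub, abs_mul, abs_of_pos hβ]
      exact mul_le_mul_of_nonneg_left this hβ.le
    simpa [hs] using this
  have hlow : ∀ l, Real.exp (s j) * Real.exp (-(β * ε)) ≤ Real.exp (s l) := by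
    intro l
    rw [← Real.exp_add]
    apply Real.exp_le_exp.2
    have := (abs_le.1 (hsd l)).2
    linarith
  have hhigh : ∀ l, Real.exp (s l) ≤ Real.exp (s j) * Real.exp (β * ε) := by
    intro l
    rw [← Real.exp_add]
    apply Real.exp_le_exp.2
    have := (abs_le.1 (hsd l)).1
    linarith
  have hSlow : (n : ℝ) * (Real.exp (s j) * Real.exp (-(β * ε))) ≤ ∑ l, Real.exp (s l) := by
    calc (n : ℝ) * (Real.exp (s j) * Real.exp (-(β * ε)))
        = ∑ _l : Fin n, Real.exp (s j) * Real.exp (-(β * ε)) := by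
          simp [Finset.sum_const, nsmul_eq_mul]
      _ ≤ ∑ l, Real.exp (s l) := Finset.sum_le_sum fun l _ => hlow l
  have hShigh : ∑ l, Real.exp (s l) ≤ (n : ℝ) * (Real.exp (s j) * Real.exp (β * ε)) := by
    calc ∑ l, Real.exp (s l) ≤ ∑ _l : Fin n, Real.exp (s j) * Real.exp (β * ε) :=
          Finset.sum_le_sum fun l _ => hhigh l
      _ = (n : ℝ) * (Real.exp (s j) * Real.exp (β * ε)) := by
          simp [Finset.sum_const, nsmul_eq_mul]
  have hSpos : 0 < ∑ l, Real.exp (s l) :=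
    Finset.sum_pos (fun l _ => Real.exp_pos _) ⟨j, Finset.mem_univ j⟩
  set S := ∑ l, Real.exp (s l) with hSdef
  have hwhigh : Real.exp (s j) / S ≤ Real.exp (β * ε) / n := by
    rw [div_le_div_iff₀ hSpos hnpos]
    have key : Real.exp (-(β * ε)) * Real.exp (β * ε) = 1 := by
      rw [← Real.exp_add]; simp
    calc Real.exp (s j) * n = (n : ℝ) * (Real.exp (s j) * Real.exp (-(β * ε))) * Real.exp (β * ε) := by
          linear_combination (-(n : ℝ) * Real.exp (s j)) * key
      _ ≤ S * Real.exp (β * ε) :=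
          mul_le_mul_of_nonneg_right hSlow (Real.exp_pos _).le
      _ = Real.exp (β * ε) * S := by ring
  have hwlow : Real.exp (-(β * ε)) / n ≤ Real.exp (s j) / S := by
    rw [div_le_div_iff₀ hnpos hSpos]
    calc Real.exp (-(β * ε)) * S
        ≤ Real.exp (-(β * ε)) * ((n : ℝ) * (Real.exp (s j) * Real.exp (β * ε))) :=
          mul_le_mul_of_nonneg_left hShigh (Real.exp_pos _).le
      _ = Real.exp (s j) * n := by
          have key : Real.exp (-(β * ε)) * Real.exp (β * ε) = 1 := by
            rw [← Real.exp_add]; simp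
          linear_combination ((n : ℝ) * Real.exp (s j)) * key
  have hexp2 : Real.exp (β * ε) + Real.exp (-(β * ε)) ≥ 2 := by
    nlinarith [Real.add_one_le_exp (β * ε), Real.add_one_le_exp (-(β * ε))]
  rw [abs_sub_le_iff]
  constructor
  · have : Real.exp (s j) / S - 1 / n ≤ Real.exp (β * ε) / n - 1 / n := by linarith
    calc Real.exp (s j) / S - 1 / n ≤ Real.exp (β * ε) / n - 1 / n := this
      _ = (1 / n) * (Real.exp (β * ε) - 1) := by ring
  · calc (1 : ℝ) / n - Real.exp (s j) / S ≤ 1 / n - Real.exp (-(β * ε)) / n := by linarith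
      _ ≤ (1 / n) * (Real.exp (β * ε) - 1) := by
          rw [div_sub_div_same, one_div_mul_eq_div]
          have h1 : 1 - Real.exp (-(β * ε)) ≤ Real.exp (β * ε) - 1 := by linarith
          gcongr
end

section
/- Let N ≥ 1, let A be a real symmetric N×N matrix that is unstable, i.e. A has a positive eigenvalue, and let D be a real symmetric positive-definite N×N matrix. Then the product DA has a positive real eigenvalue; in other words, DA is also unstable. -/
open Matrix
open scoped MatrixOrder

lemma aux_neg_posSemidef {N : ℕ} {B : Matrix (Fin N) (Fin N) ℝ} (hB : B.IsHermitian)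
    (h : ∀ i, hB.eigenvalues i ≤ 0) : (-B).PosSemidef := by
  have heq : -B = (hB.eigenvectorUnitary : Matrix (Fin N) (Fin N) ℝ)
      * diagonal (fun i => -(hB.eigenvalues i))
      * (hB.eigenvectorUnitary : Matrix (Fin N) (Fin N) ℝ)ᴴ := by
    conv_lhs => rw [hB.spectral_theorem]
    simp [Matrix.neg_mul, Matrix.mul_neg, ← diagonal_neg, Matrix.star_eq_conjTranspose,
      Function.comp]
  rw [heq]
  exact (posSemidef_diagonal_iff.mpr fun i => by simpa using h i).mul_mul_conjTranspose_same _

/-- the product of a symmetric positive-definite matrix and an unstable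
symmetric matrix is unstable: if the real symmetric matrix `A` has a positive eigenvalue and
`D` is symmetric positive definite, then `D * A` has a positive real eigenvalue. -/
theorem posDef_mul_unstable_is_unstable (N : ℕ) (hN : 1 ≤ N)
    (A D : Matrix (Fin N) (Fin N) ℝ)
    (hA : A.IsSymm) (hD : D.PosDef)
    (hunstable : ∃ (μ : ℝ) (v : Fin N → ℝ), 0 < μ ∧ v ≠ 0 ∧ A *ᵥ v = μ • v) :
    ∃ (μ : ℝ) (v : Fin N → ℝ), 0 < μ ∧ v ≠ 0 ∧ (D * A) *ᵥ v = μ • v := by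
  obtain ⟨μ, v, hμ, hv, hAv⟩ := hunstable
  set P := CFC.sqrt D with hPdef
  have hP2 : P * P = D := CFC.sqrt_mul_sqrt_self D hD.posSemidef.nonneg
  have hPh : P.IsHermitian := (Matrix.nonneg_iff_posSemidef.mp (CFC.sqrt_nonneg D)).isHermitian
  have hPdet : IsUnit P.det := by
    have hDdet : 0 < D.det := hD.det_pos
    rw [← hP2, det_mul] at hDdet
    have : P.det ≠ 0 := fun h => by simp [h] at hDdet
    exact this.isUnit
  -- B = P * A * P is hermitian
  set B := P * A * P with hBdef
  have hAh : A.IsHermitian := by rwa [Matrix.IsHermitian, conjTranspose_eq_transpose_of_trivial,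
    ← Matrix.IsSymm]
  have hBh : B.IsHermitian := by
    rw [Matrix.IsHermitian, hBdef, conjTranspose_mul, conjTranspose_mul, hPh.eq, hAh.eq,
      mul_assoc]
  -- the vector w = P⁻¹ v
  set w : Fin N → ℝ := P⁻¹ *ᵥ v with hwdef
  have hPw : P *ᵥ w = v := by
    rw [hwdef, mulVec_mulVec, mul_nonsing_inv _ hPdet, one_mulVec]
  -- quadratic form positivity
  have hquad : 0 < dotProduct (star w) (B *ᵥ w) := by
    have hBw : B *ᵥ w = μ • (P *ᵥ v) := by
      rw [hBdef, ← mulVec_mulVec, ← mulVec_mulVec, hPw, hAv, mulVec_smul]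
    rw [hBw, dotProduct_smul, star_trivial]
    have : dotProduct w (P *ᵥ v) = dotProduct v v := by
      rw [dotProduct_mulVec, ← hPh.eq, conjTranspose_eq_transpose_of_trivial,
        ← mulVec_transpose, transpose_transpose, hPw]
    rw [smul_eq_mul, this]
    exact mul_pos hμ (by
      have : v ⬝ᵥ v ≠ 0 := fun h => hv ((dotProduct_self_eq_zero).mp h)
      have hnn : 0 ≤ v ⬝ᵥ v := Finset.sum_nonneg fun i _ => mul_self_nonneg (v i)
      exact lt_of_le_of_ne hnn (Ne.symm this))
  -- B has a positive eigenvalue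
  have hex : ∃ i, 0 < hBh.eigenvalues i := by
    by_contra hcon
    push_neg at hcon
    have := (aux_neg_posSemidef hBh hcon).dotProduct_mulVec_nonneg w
    rw [neg_mulVec, dotProduct_neg] at this
    linarith
  obtain ⟨i, hi⟩ := hex
  set u := ⇑(hBh.eigenvectorBasis i) with hudef
  have hBu : B *ᵥ u = hBh.eigenvalues i • u := hBh.mulVec_eigenvectorBasis i
  have hu : u ≠ 0 := by
    intro h
    have hnorm := hBh.eigenvectorBasis.orthonormal.1 i
    have hz : hBh.eigenvectorBasis i = 0 := by
      ext j; exact congrFun h j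
    rw [hz, norm_zero] at hnorm
    norm_num at hnorm
  refine ⟨hBh.eigenvalues i, P *ᵥ u, hi, ?_, ?_⟩
  · intro h
    apply hu
    have : P⁻¹ *ᵥ (P *ᵥ u) = u := by
      rw [mulVec_mulVec, nonsing_inv_mul _ hPdet, one_mulVec]
    rw [← this, h, mulVec_zero]
  · calc (D * A) *ᵥ (P *ᵥ u) = P *ᵥ (B *ᵥ u) := by
          rw [hBdef, ← hP2]
          simp only [mulVec_mulVec, mul_assoc]
        _ = hBh.eigenvalues i • (P *ᵥ u) := by rw [hBu, mulVec_smul]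
end
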